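/- arXiv:1403.3896 — 4 statements merged into one kernel-verified Lean document; each statement's English description precedes it below -/
import Mathlib

section
/- Let G be a group, N a normal subgroup of G, u ∈ N and h ∈ G. Then u·(h⁻¹uh)·(h⁻²uh²) is congruent to u³·[u,h]³·[[u,h],h] modulo the commutator subgroup [N,N], where [a,b] = a⁻¹b⁻¹ab. -/
open scoped commutatorElement

private lemma trace_cube_aux {Q : Type*} [Group Q] (A H : Q)
    (h1 : Commute A (H⁻¹ * A * H)) :
    (A * (H⁻¹ * A * H) * (H⁻¹ * H⁻¹ * A * H * H))⁻¹ *
      (A ^ 3 * (A⁻¹ * H⁻¹ * A * H) ^ 3 *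
        ((A⁻¹ * H⁻¹ * A * H)⁻¹ * H⁻¹ * (A⁻¹ * H⁻¹ * A * H) * H)) = 1 := by
  set B := H⁻¹ * A * H with hB
  set C := H⁻¹ * H⁻¹ * A * H * H with hC
  have e1 : (A⁻¹ * B) ^ 3 = A⁻¹ ^ 3 * B ^ 3 := (h1.inv_left).mul_pow 3
  calc (A * B * C)⁻¹ *
      (A ^ 3 * (A⁻¹ * H⁻¹ * A * H) ^ 3 *
        ((A⁻¹ * H⁻¹ * A * H)⁻¹ * H⁻¹ * (A⁻¹ * H⁻¹ * A * H) * H))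
      = (A * B * C)⁻¹ * (A ^ 3 * (A⁻¹ * B) ^ 3 * (B⁻¹ * A * B⁻¹ * C)) := by
        rw [hB, hC]; group
    _ = (A * B * C)⁻¹ * (B ^ 2 * A * (B⁻¹ * C)) := by rw [e1]; group
    _ = (A * B * C)⁻¹ * (A * B ^ 2 * (B⁻¹ * C)) := by rw [(h1.symm.pow_left 2).eq]
    _ = 1 := by group

/-- Let `G` be a group, `N` a normal subgroup, `u ∈ N`, `h ∈ G`. Then
`u·(h⁻¹uh)·(h⁻²uh²)` is congruent to `u³·[u,h]³·[[u,h],h]` modulo `[N,N]`,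
where `[a,b] = a⁻¹b⁻¹ab`. -/
theorem trace_cube_congr (G : Type*) [Group G] (N : Subgroup G) [N.Normal]
    (u h : G) (hu : u ∈ N) :
    (u * (h⁻¹ * u * h) * (h⁻¹ * h⁻¹ * u * h * h))⁻¹ *
      (u ^ 3 * (u⁻¹ * h⁻¹ * u * h) ^ 3 *
        ((u⁻¹ * h⁻¹ * u * h)⁻¹ * h⁻¹ * (u⁻¹ * h⁻¹ * u * h) * h)) ∈ ⁅N, N⁆ := by
  rw [← QuotientGroup.eq_one_iff]
  have hconj : h⁻¹ * u * h ∈ N := by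
    simpa using (‹N.Normal›.conj_mem u hu h⁻¹)
  have hcom : (⁅u, h⁻¹ * u * h⁆ : G) ∈ ⁅N, N⁆ :=
    Subgroup.commutator_mem_commutator hu hconj
  have hcom1 : ((⁅u, h⁻¹ * u * h⁆ : G) : G ⧸ ⁅N, N⁆) = 1 :=
    (QuotientGroup.eq_one_iff _).mpr hcom
  have hC : Commute ((u : G ⧸ ⁅N, N⁆)) (((h : G ⧸ ⁅N, N⁆))⁻¹ * u * h) := by
    have : (⁅(u : G ⧸ ⁅N, N⁆), ((h : G ⧸ ⁅N, N⁆))⁻¹ * u * h⁆) = 1 := by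
      simpa [commutatorElement_def] using hcom1
    exact (commutatorElement_eq_one_iff_commute).mp this
  calc ((((u * (h⁻¹ * u * h) * (h⁻¹ * h⁻¹ * u * h * h))⁻¹ *
      (u ^ 3 * (u⁻¹ * h⁻¹ * u * h) ^ 3 *
        ((u⁻¹ * h⁻¹ * u * h)⁻¹ * h⁻¹ * (u⁻¹ * h⁻¹ * u * h) * h)) : G)) : G ⧸ ⁅N, N⁆)
      = ((u : G ⧸ ⁅N, N⁆) * (((h : G ⧸ ⁅N, N⁆))⁻¹ * u * h) * (h⁻¹ * h⁻¹ * u * h * h))⁻¹ *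
        ((u : G ⧸ ⁅N, N⁆) ^ 3 * ((u : G ⧸ ⁅N, N⁆)⁻¹ * h⁻¹ * u * h) ^ 3 *
          (((u : G ⧸ ⁅N, N⁆)⁻¹ * h⁻¹ * u * h)⁻¹ * h⁻¹ * ((u : G ⧸ ⁅N, N⁆)⁻¹ * h⁻¹ * u * h) * h)) := by
        simp only [QuotientGroup.mk_mul, QuotientGroup.mk_inv, QuotientGroup.mk_pow]
    _ = 1 := trace_cube_aux _ _ hC
end

section
/- Let p ≥ 3 be odd and G the extraspecial group of order p³ and exponent p² (i.e., G = ⟨x,y : xᵖ = [y,x], yᵖ = 1, [y,x] central of order p⟩). Then for each of the p+1 maximal subgroups M_i of G, the kernel of the transfer V_i : G/[G,G] → M_i/[M_i,M_i] equals M₁/[G,G] where M₁ = ⟨y, [G,G]⟩. In particular, all p+1 transfer kernels coincide. -/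
open Subgroup MulAction Function
open scoped commutatorElement

section Helpers

variable {Γ : Type*} [Group Γ] {A : Type*} [CommGroup A]

private lemma smul_quot_eq (H : Subgroup Γ) [H.Normal] (u : Γ) (q : Γ ⧸ H) :
    u • q = (QuotientGroup.mk u : Γ ⧸ H) * q := by
  induction q using QuotientGroup.induction_on with
  | H a => rfl

/-- Transfer of an element generating `G/H`, when its `p`-th power is central. -/
private lemma transferA {H : Subgroup Γ} [H.Normal] [H.FiniteIndex] (ϕ : ↥H →* A)
    {p : ℕ} (hp : p.Prime) (hidx : H.index = p) {g : Γ} (hg : g ∉ H)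
    (hgc : ∀ w : Γ, w * g ^ p = g ^ p * w) (hgH : g ^ p ∈ H) :
    MonoidHom.transfer ϕ g = ϕ ⟨g ^ p, hgH⟩ := by
  classical
  haveI hfin : Finite (Γ ⧸ H) := by
    refine Nat.finite_of_card_ne_zero ?_
    rw [← H.index_eq_card, hidx]
    exact hp.ne_zero
  letI : Fintype (Γ ⧸ H) := Fintype.ofFinite _
  letI : Fintype (Quotient (orbitRel (zpowers g) (Γ ⧸ H))) := Fintype.ofFinite _
  have hg1 : (QuotientGroup.mk g : Γ ⧸ H) ≠ 1 := by
    simpa [QuotientGroup.eq_one_iff] using hg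
  have hgp1 : (QuotientGroup.mk g : Γ ⧸ H) ^ p = 1 := by
    rw [← QuotientGroup.mk_pow]
    exact (QuotientGroup.eq_one_iff _).mpr hgH
  have hordg : orderOf (QuotientGroup.mk g : Γ ⧸ H) = p := by
    rcases hp.eq_one_or_self_of_dvd _ (orderOf_dvd_of_pow_eq_one hgp1) with h | h
    · exact absurd (orderOf_eq_one_iff.mp h) hg1
    · exact h
  have htop : zpowers (QuotientGroup.mk g : Γ ⧸ H) = ⊤ := by
    apply Subgroup.eq_top_of_card_eq
    rw [Nat.card_zpowers, hordg, ← H.index_eq_card, hidx]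
  haveI : Subsingleton (Quotient (orbitRel (zpowers g) (Γ ⧸ H))) := by
    constructor
    intro q q'
    refine Quotient.inductionOn₂' q q' (fun r r' => ?_)
    apply Quotient.sound'
    rw [orbitRel_apply, MulAction.mem_orbit_iff]
    have hmem : r * r'⁻¹ ∈ zpowers (QuotientGroup.mk g : Γ ⧸ H) := htop ▸ Subgroup.mem_top _
    obtain ⟨n, hn⟩ := (isOfFinOrder_of_finite _).mem_powers_iff_mem_zpowers.mpr hmem
    refine ⟨⟨g, mem_zpowers g⟩ ^ n, ?_⟩
    have : ((⟨g, mem_zpowers g⟩ ^ n : zpowers g) : Γ) • r' = (g ^ n) • r' := rfl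
    have hn' : (QuotientGroup.mk g : Γ ⧸ H) ^ n = r * r'⁻¹ := hn
    show ((⟨g, mem_zpowers g⟩ ^ n : zpowers g) : Γ) • r' = r
    rw [this, smul_quot_eq, QuotientGroup.mk_pow, hn',
      inv_mul_cancel_right]
  rw [MonoidHom.transfer_eq_prod_quotient_orbitRel_zpowers_quot,
    Fintype.prod_subsingleton _ (Quotient.mk'' (1 : Γ ⧸ H))]
  set q₀ : Quotient (orbitRel (zpowers g) (Γ ⧸ H)) := Quotient.mk'' (1 : Γ ⧸ H) with hq₀
  have hper : IsPeriodicPt (g • ·) p (Quotient.out q₀) := by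
    rw [IsPeriodicPt, IsFixedPt, smul_iterate]
    show g ^ p • (Quotient.out q₀) = Quotient.out q₀
    rw [smul_quot_eq, QuotientGroup.mk_pow, hgp1, one_mul]
  have hmin : Function.minimalPeriod (g • ·) (Quotient.out q₀) = p := by
    rcases hp.eq_one_or_self_of_dvd _ (IsPeriodicPt.minimalPeriod_dvd hper) with h | h
    · exfalso
      have hfix : g • (Quotient.out q₀) = Quotient.out q₀ :=
        Function.minimalPeriod_eq_one_iff_isFixedPt.mp h
      rw [smul_quot_eq] at hfix
      exact hg ((QuotientGroup.eq_one_iff _).mp (mul_eq_right.mp hfix))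
    · exact h
  refine congrArg ϕ (Subtype.ext ?_)
  show _ * g ^ Function.minimalPeriod (g • ·) (Quotient.out q₀) * _ = g ^ p
  rw [hmin, mul_assoc, ← hgc, ← mul_assoc, inv_mul_cancel, one_mul]

/-- Transfer of an element of `H`, `H` normal: product of conjugates over coset reps. -/
private lemma transferB {H : Subgroup Γ} (hN : H.Normal) [H.FiniteIndex] [Fintype (Γ ⧸ H)]
    (ϕ : ↥H →* A) {g : Γ} (hg : g ∈ H) :
    MonoidHom.transfer ϕ g =
      ∏ r : Γ ⧸ H, ϕ ⟨r.out⁻¹ * g * r.out, by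
        simpa using hN.conj_mem g hg r.out⁻¹⟩ := by
  classical
  letI : Fintype (Quotient (orbitRel (zpowers g) (Γ ⧸ H))) := Fintype.ofFinite _
  have hfix : ∀ u : Γ, u ∈ H → ∀ r : Γ ⧸ H, u • r = r := by
    intro u hu r
    induction r using QuotientGroup.induction_on with
    | H a =>
      show QuotientGroup.mk (u * a) = QuotientGroup.mk a
      rw [QuotientGroup.eq]
      simpa [mul_inv_rev, mul_assoc] using hN.conj_mem u⁻¹ (inv_mem hu) a⁻¹
  have horb : ∀ r r' : Γ ⧸ H, orbitRel (zpowers g) (Γ ⧸ H) r r' → r = r' := by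
    intro r r' h
    rw [orbitRel_apply, MulAction.mem_orbit_iff] at h
    obtain ⟨⟨u, huz⟩, hu⟩ := h
    have huH : u ∈ H := zpowers_le.mpr hg huz
    rw [← hu]
    exact hfix u huH r'
  have hbij : Function.Bijective
      (Quotient.mk'' : (Γ ⧸ H) → Quotient (orbitRel (zpowers g) (Γ ⧸ H))) :=
    ⟨fun a b hab => horb a b (Quotient.exact' hab), Quotient.mk''_surjective⟩
  have hout : ∀ r : Γ ⧸ H,
      (Quotient.mk'' r : Quotient (orbitRel (zpowers g) (Γ ⧸ H))).out = r := by
    intro r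
    refine horb _ _ (Quotient.exact' ?_)
    show Quotient.mk'' _ = Quotient.mk'' r
    rw [Quotient.out_eq']
  rw [MonoidHom.transfer_eq_prod_quotient_orbitRel_zpowers_quot]
  refine (Fintype.prod_bijective _ hbij _ _ (fun r => ?_)).symm
  refine congrArg ϕ (Subtype.ext ?_)
  show r.out⁻¹ * g * r.out = _ * g ^ Function.minimalPeriod (g • ·) (Quotient.mk'' r).out * _
  rw [hout r]
  have h1 : Function.minimalPeriod (g • ·) r = 1 :=
    Function.minimalPeriod_eq_one_iff_isFixedPt.mpr (hfix g hg r)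
  rw [h1, pow_one]

end Helpers

set_option maxHeartbeats 2000000 in
/-- Let `p ≥ 3` be odd prime and `G` the extraspecial group of order `p³` and
exponent `p²`, i.e. `G = ⟨x,y : xᵖ = [y,x], yᵖ = 1, [y,x] central of order p⟩`.
Then for each maximal subgroup `M` of `G`, the kernel of the transfer
`V : G/[G,G] → M/[M,M]` equals `M₁/[G,G]` where `M₁ = ⟨y,[G,G]⟩`; in particular
all `p+1` transfer kernels coincide. -/
theorem extraspecial_exponent_p_squared_transfer_kernels
    (p : ℕ) (hp : p.Prime) (hodd : Odd p) (h3 : 3 ≤ p)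
    (G : Type*) [Group G] [Finite G] (hcard : Nat.card G = p ^ 3)
    (x y : G) (hgen : Subgroup.closure {x, y} = ⊤)
    (hxp : x ^ p = y⁻¹ * x⁻¹ * y * x) (hyp : y ^ p = 1)
    (hcen : y⁻¹ * x⁻¹ * y * x ∈ Subgroup.center G)
    (hord : orderOf (y⁻¹ * x⁻¹ * y * x) = p) :
    ∀ M : Subgroup G, IsCoatom M →
      (MonoidHom.transfer (Abelianization.of : ↥M →* Abelianization ↥M)).ker =
        Subgroup.closure (insert y (commutator G : Set G)) := by
  classical
  intro M hM
  -- basic facts about the commutator z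
  set z : G := y⁻¹ * x⁻¹ * y * x with hzdef
  have hcentral : ∀ w : G, w ∈ Subgroup.center G → ∀ g : G, g * w = w * g := fun w hw g =>
    Subgroup.mem_center_iff.mp hw g
  have hzc : ∀ g : G, g * z = z * g := hcentral z hcen
  have hzp : z ^ p = 1 := by rw [← hord]; exact pow_orderOf_eq_one z
  have hz1 : z ≠ 1 := by
    intro h
    rw [h, orderOf_one] at hord
    omega
  have hxpz : x ^ p = z := hxp
  have hxyx : x⁻¹ * y * x = y * z := by rw [hzdef]; group
  have hyxy : y⁻¹ * x * y = x * z⁻¹ := by rw [hzdef]; group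
  have hzkc : ∀ (k : ℤ) (g : G), g * z ^ k = z ^ k * g := fun k g =>
    hcentral _ (Subgroup.zpow_mem (Subgroup.center G) hcen k) g
  have hznc : ∀ (k : ℕ) (g : G), g * z ^ k = z ^ k * g := fun k g =>
    hcentral _ (Subgroup.pow_mem (Subgroup.center G) hcen k) g
  have hzinc : ∀ (k : ℕ) (g : G), g * z⁻¹ ^ k = z⁻¹ ^ k * g := fun k g =>
    hcentral _ (Subgroup.pow_mem (Subgroup.center G) (inv_mem hcen) k) g
  -- conjugation formulas
  have hxi : ∀ i : ℕ, (x ^ i)⁻¹ * y * x ^ i = y * z ^ i := by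
    intro i
    induction i with
    | zero => simp
    | succ n ih =>
      have h0 : (x ^ (n+1))⁻¹ * y * x ^ (n+1) = x⁻¹ * ((x ^ n)⁻¹ * y * x ^ n) * x := by
        rw [pow_succ]; group
      rw [h0, ih]
      calc x⁻¹ * (y * z ^ n) * x
          = x⁻¹ * y * (z ^ n * x) := by group
        _ = x⁻¹ * y * (x * z ^ n) := by rw [← hznc n x]
        _ = (x⁻¹ * y * x) * z ^ n := by group
        _ = y * z * z ^ n := by rw [hxyx]
        _ = y * z ^ (n + 1) := by rw [pow_succ]; group
  have hyi : ∀ i : ℕ, (y ^ i)⁻¹ * x * y ^ i = x * z⁻¹ ^ i := by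
    intro i
    induction i with
    | zero => simp
    | succ n ih =>
      have h0 : (y ^ (n+1))⁻¹ * x * y ^ (n+1) = y⁻¹ * ((y ^ n)⁻¹ * x * y ^ n) * y := by
        rw [pow_succ]; group
      rw [h0, ih]
      calc y⁻¹ * (x * z⁻¹ ^ n) * y
          = y⁻¹ * x * (z⁻¹ ^ n * y) := by group
        _ = y⁻¹ * x * (y * z⁻¹ ^ n) := by rw [← hzinc n y]
        _ = (y⁻¹ * x * y) * z⁻¹ ^ n := by group
        _ = x * z⁻¹ * z⁻¹ ^ n := by rw [hyxy]
        _ = x * z⁻¹ ^ (n + 1) := by rw [pow_succ]; group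
  -- zpowers z is normal (it is central)
  haveI hZnormal : (Subgroup.zpowers z).Normal := by
    constructor
    intro n hn g
    obtain ⟨k, rfl⟩ := hn
    have he : g * z ^ k * g⁻¹ = z ^ k := by rw [hzkc k g]; group
    rw [he]
    exact Subgroup.zpow_mem _ (Subgroup.mem_zpowers z) k
  -- the commutator subgroup is contained in ⟨z⟩
  have hcommZ : commutator G ≤ Subgroup.zpowers z := by
    rw [_root_.commutator_def, Subgroup.commutator_le]
    intro g _ h _
    have hQgen : Subgroup.closure
        ({QuotientGroup.mk x, QuotientGroup.mk y} : Set (G ⧸ Subgroup.zpowers z)) = ⊤ := by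
      have hmap := Subgroup.map_top_of_surjective (QuotientGroup.mk' (Subgroup.zpowers z))
        (QuotientGroup.mk'_surjective _)
      rw [← hgen, MonoidHom.map_closure] at hmap
      rw [← hmap]
      congr 1
      rw [Set.image_insert_eq, Set.image_singleton]
      rfl
    have hxyc : Commute (QuotientGroup.mk x : G ⧸ Subgroup.zpowers z) (QuotientGroup.mk y) := by
      show _ * _ = _ * _
      rw [← QuotientGroup.mk_mul, ← QuotientGroup.mk_mul, QuotientGroup.eq]
      refine ⟨1, ?_⟩
      show z ^ (1 : ℤ) = _
      rw [zpow_one, hzdef]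
      group
    have hQab : ∀ a b : G ⧸ Subgroup.zpowers z, Commute a b := by
      intro a b
      have ha : a ∈ Subgroup.closure
          ({QuotientGroup.mk x, QuotientGroup.mk y} : Set (G ⧸ Subgroup.zpowers z)) :=
        hQgen ▸ Subgroup.mem_top a
      have hb : b ∈ Subgroup.closure
          ({QuotientGroup.mk x, QuotientGroup.mk y} : Set (G ⧸ Subgroup.zpowers z)) :=
        hQgen ▸ Subgroup.mem_top b
      refine Subgroup.closure_induction₂ (fun u v hu hv => ?_) (fun v _ => Commute.one_left v)
        (fun v _ => Commute.one_right v)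
        (fun a' b' c' _ _ _ h1 h2 => h1.mul_left h2)
        (fun a' b' c' _ _ _ h1 h2 => h1.mul_right h2)
        (fun a' b' _ _ h1 => h1.inv_left)
        (fun a' b' _ _ h1 => h1.inv_right) ha hb
      rcases hu with hu | hu <;> rcases hv with hv | hv <;>
        obtain rfl := hu <;> obtain rfl := hv
      · exact Commute.refl _
      · exact hxyc
      · exact hxyc.symm
      · exact Commute.refl _
    have h1 : (QuotientGroup.mk ⁅g, h⁆ : G ⧸ Subgroup.zpowers z) = 1 := by
      have h2 : (QuotientGroup.mk' (Subgroup.zpowers z)) ⁅g, h⁆ =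
          ⁅(QuotientGroup.mk' (Subgroup.zpowers z)) g, (QuotientGroup.mk' (Subgroup.zpowers z)) h⁆ :=
        map_commutatorElement _ g h
      rw [QuotientGroup.mk'_apply] at h2
      rw [h2]
      exact commutatorElement_eq_one_iff_commute.mpr (hQab _ _)
    exact (QuotientGroup.eq_one_iff _).mp h1
  -- z lies in the commutator subgroup
  have hzcomm : z ∈ commutator G := by
    have he : z = ⁅y⁻¹, x⁻¹⁆ := by rw [commutatorElement_def, hzdef]; group
    rw [he, _root_.commutator_def]
    exact Subgroup.commutator_mem_commutator (Subgroup.mem_top _) (Subgroup.mem_top _)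
  -- z lies in every maximal subgroup
  have hzM : z ∈ M := by
    by_contra hzM
    have hlt : M < M ⊔ Subgroup.zpowers z := by
      refine lt_of_le_of_ne le_sup_left (fun h => hzM ?_)
      rw [h]
      exact (le_sup_right : Subgroup.zpowers z ≤ M ⊔ Subgroup.zpowers z)
        (Subgroup.mem_zpowers z)
    have htop := hM.2 _ hlt
    have key : ∀ (a : G) (k : ℤ) (w : G), (a * z ^ k)⁻¹ * w * (a * z ^ k) = a⁻¹ * w * a := by
      intro a k w
      have h1 : (a * z ^ k)⁻¹ * w * (a * z ^ k) = (z ^ k)⁻¹ * (a⁻¹ * w * a) * z ^ k := by group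
      rw [h1, mul_assoc, hzkc k (a⁻¹ * w * a)]
      group
    have hdec : ∀ g : G, ∃ m ∈ M, ∃ k : ℤ, g = m * z ^ k := by
      intro g
      have hg : g ∈ (↑(M ⊔ Subgroup.zpowers z) : Set G) := by
        rw [htop]; trivial
      rw [Subgroup.mul_normal M (Subgroup.zpowers z)] at hg
      obtain ⟨m, hm, w, hw, hmw⟩ := hg
      obtain ⟨k, rfl⟩ := hw
      exact ⟨m, hm, k, hmw.symm⟩
    obtain ⟨m, hm, j, hxm⟩ := hdec x
    obtain ⟨m', hm', k, hym⟩ := hdec y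
    have e1 : x⁻¹ * y * x = m⁻¹ * y * m := by rw [hxm]; exact key m j y
    have e2 : y⁻¹ * m⁻¹ * y = m'⁻¹ * m⁻¹ * m' := by rw [hym]; exact key m' k m⁻¹
    have e3 : z = m'⁻¹ * m⁻¹ * m' * m := by
      calc z = y⁻¹ * (x⁻¹ * y * x) := by rw [hzdef]; group
        _ = y⁻¹ * (m⁻¹ * y * m) := by rw [e1]
        _ = (y⁻¹ * m⁻¹ * y) * m := by group
        _ = m'⁻¹ * m⁻¹ * m' * m := by rw [e2]
    rw [e3] at hzM
    exact hzM (mul_mem (mul_mem (mul_mem (inv_mem hm') (inv_mem hm)) hm') hm)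
  -- normality from containing the commutator subgroup
  have mknormal : ∀ K : Subgroup G, commutator G ≤ K → K.Normal := by
    intro K hK
    constructor
    intro n hn g
    have he : g * n * g⁻¹ = n * ⁅n⁻¹, g⁆ := by rw [commutatorElement_def]; group
    rw [he]
    refine mul_mem hn (hK ?_)
    rw [_root_.commutator_def]
    exact Subgroup.commutator_mem_commutator (Subgroup.mem_top _) (Subgroup.mem_top _)
  have hcommM : commutator G ≤ M := le_trans hcommZ (Subgroup.zpowers_le.mpr hzM)
  haveI hMnormal : M.Normal := mknormal M hcommM
  -- x and y cannot both lie in M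
  have hnotboth : x ∉ M ∨ y ∉ M := by
    by_contra hb
    push_neg at hb
    refine hM.1 (top_le_iff.mp ?_)
    rw [← hgen, Subgroup.closure_le]
    rw [Set.insert_subset_iff]
    exact ⟨hb.1, Set.singleton_subset_iff.mpr hb.2⟩
  -- M has index p
  have hidxM : M.index = p := by
    obtain ⟨g₀, hg₀⟩ : ∃ g₀ : G, g₀ ∉ M := by
      rcases hnotboth with h | h
      exacts [⟨x, h⟩, ⟨y, h⟩]
    have hdichot : ∀ W : Subgroup (G ⧸ M), W = ⊥ ∨ W = ⊤ := by
      intro W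
      have hle : M ≤ Subgroup.comap (QuotientGroup.mk' M) W := by
        intro a ha
        rw [Subgroup.mem_comap]
        have : (QuotientGroup.mk' M) a = 1 := (QuotientGroup.eq_one_iff a).mpr ha
        rw [this]
        exact one_mem W
      rcases eq_or_lt_of_le hle with heq | hlt
      · left
        calc W = Subgroup.map (QuotientGroup.mk' M) (Subgroup.comap (QuotientGroup.mk' M) W) :=
              (Subgroup.map_comap_eq_self_of_surjective (QuotientGroup.mk'_surjective M) W).symm
          _ = Subgroup.map (QuotientGroup.mk' M) M := by rw [← heq]
          _ = ⊥ := QuotientGroup.map_mk'_self M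
      · right
        have h2 : Subgroup.comap (QuotientGroup.mk' M) W = ⊤ := hM.2 _ hlt
        calc W = Subgroup.map (QuotientGroup.mk' M) (Subgroup.comap (QuotientGroup.mk' M) W) :=
              (Subgroup.map_comap_eq_self_of_surjective (QuotientGroup.mk'_surjective M) W).symm
          _ = Subgroup.map (QuotientGroup.mk' M) ⊤ := by rw [h2]
          _ = ⊤ := Subgroup.map_top_of_surjective _ (QuotientGroup.mk'_surjective M)
    have hg₀1 : (QuotientGroup.mk g₀ : G ⧸ M) ≠ 1 := by
      simpa [QuotientGroup.eq_one_iff] using hg₀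
    have hzt : Subgroup.zpowers (QuotientGroup.mk g₀ : G ⧸ M) = ⊤ := by
      rcases hdichot (Subgroup.zpowers (QuotientGroup.mk g₀)) with h | h
      · exact absurd (Subgroup.zpowers_eq_bot.mp h) hg₀1
      · exact h
    have hcardQ : Nat.card (G ⧸ M) = orderOf (QuotientGroup.mk g₀ : G ⧸ M) := by
      rw [← Nat.card_zpowers, hzt, Subgroup.card_top]
    have hdvd : orderOf (QuotientGroup.mk g₀ : G ⧸ M) ∣ p ^ 3 := by
      calc orderOf (QuotientGroup.mk g₀ : G ⧸ M) ∣ Nat.card (G ⧸ M) := hcardQ ▸ dvd_refl _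
        _ ∣ Nat.card G := by rw [← M.index_eq_card]; exact M.index_dvd_card
        _ = p ^ 3 := hcard
    obtain ⟨k, hk3, hkord⟩ := (Nat.dvd_prime_pow hp).mp hdvd
    have hk1 : k = 1 := by
      by_contra hkne
      rcases Nat.lt_or_ge k 1 with hk | hk
      · have hk0 : k = 0 := by omega
        rw [hk0, pow_zero] at hkord
        exact hg₀1 (orderOf_eq_one_iff.mp hkord)
      have hk2 : 2 ≤ k := by omega
      have hne1 : (QuotientGroup.mk g₀ : G ⧸ M) ^ p ≠ 1 := by
        intro hone
        have hd := orderOf_dvd_of_pow_eq_one hone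
        rw [hkord] at hd
        have hle := Nat.le_of_dvd hp.pos hd
        have h2 : p ^ 2 ≤ p ^ k := Nat.pow_le_pow_right hp.pos hk2
        have h2' : p * p ≤ p := by
          calc p * p = p ^ 2 := by ring
            _ ≤ p ^ k := h2
            _ ≤ p := hle
        nlinarith [hp.two_le]
      have hzt2 : Subgroup.zpowers ((QuotientGroup.mk g₀ : G ⧸ M) ^ p) = ⊤ := by
        rcases hdichot (Subgroup.zpowers ((QuotientGroup.mk g₀ : G ⧸ M) ^ p)) with h | h
        · exact absurd (Subgroup.zpowers_eq_bot.mp h) hne1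
        · exact h
      have hmem : (QuotientGroup.mk g₀ : G ⧸ M) ∈
          Subgroup.zpowers ((QuotientGroup.mk g₀ : G ⧸ M) ^ p) := by
        rw [hzt2]; trivial
      obtain ⟨j, hj₀⟩ := hmem
      have hj : ((QuotientGroup.mk g₀ : G ⧸ M) ^ p) ^ j = QuotientGroup.mk g₀ := hj₀
      rw [← zpow_natCast ((QuotientGroup.mk g₀ : G ⧸ M)) p, ← zpow_mul] at hj
      have hone : (QuotientGroup.mk g₀ : G ⧸ M) ^ ((p : ℤ) * j - 1) = 1 := by
        rw [zpow_sub, hj, zpow_one, mul_inv_cancel]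
      have hd2 : ((p : ℤ) ^ k) ∣ ((p : ℤ) * j - 1) := by
        have := orderOf_dvd_iff_zpow_eq_one.mpr hone
        rwa [hkord, Nat.cast_pow] at this
      have hd3 : (p : ℤ) ∣ ((p : ℤ) * j - 1) :=
        dvd_trans (dvd_pow_self (p : ℤ) (by omega)) hd2
      have hd4 : (p : ℤ) ∣ 1 := by
        have : (p : ℤ) * j - ((p : ℤ) * j - 1) = 1 := by ring
        rw [← this]
        exact dvd_sub (dvd_mul_right _ _) hd3
      have := Int.le_of_dvd one_pos hd4
      have hp2 := hp.two_le
      omega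
    rw [M.index_eq_card, hcardQ, hkord, hk1, pow_one]
  -- M is abelian of order p²
  have hcardM : Nat.card ↥M = p ^ 2 := by
    have h1 := M.card_mul_index
    rw [hidxM, hcard] at h1
    have h2 : p ^ 3 = p ^ 2 * p := by ring
    rw [h2] at h1
    exact Nat.eq_of_mul_eq_mul_right hp.pos h1
  haveI : Fact p.Prime := ⟨hp⟩
  have hMcomm : ∀ a b : ↥M, a * b = b * a := IsPGroup.commutative_of_card_eq_prime_sq hcardM
  have hMcommG : ∀ a b : G, a ∈ M → b ∈ M → a * b = b * a := fun a b ha hb =>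
    Subtype.ext_iff.mp (hMcomm ⟨a, ha⟩ ⟨b, hb⟩)
  have hconjM : ∀ m w : G, m ∈ M → w ∈ M → m⁻¹ * w * m = w := by
    intro m w hm hw
    rw [mul_assoc, hMcommG w m hw hm, ← mul_assoc, inv_mul_cancel, one_mul]
  -- the auxiliary function Φ
  set Φ : G → Abelianization ↥M := fun w => if h : w ∈ M then Abelianization.of ⟨w, h⟩ else 1
    with hΦdef
  have hΦ : ∀ (w : G) (h : w ∈ M),
      (Abelianization.of : ↥M →* Abelianization ↥M) ⟨w, h⟩ = Φ w := by
    intro w h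
    simp only [hΦdef, dif_pos h]
  have hΦmul : ∀ a b : G, a ∈ M → b ∈ M → Φ (a * b) = Φ a * Φ b := by
    intro a b ha hb
    simp only [hΦdef, dif_pos ha, dif_pos hb, dif_pos (mul_mem ha hb)]
    rw [← map_mul]
    rfl
  have hΦone : Φ 1 = 1 := by
    simp only [hΦdef, dif_pos (one_mem M)]
    exact map_one (Abelianization.of : ↥M →* Abelianization ↥M)
  have hΦpow : ∀ (a : G), a ∈ M → ∀ n : ℕ, Φ (a ^ n) = Φ a ^ n := by
    intro a ha n
    induction n with
    | zero => simpa using hΦone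
    | succ n ih => rw [pow_succ, hΦmul _ _ (pow_mem ha n) ha, ih, pow_succ]
  have hΦz : Φ z ≠ 1 := by
    have hcommMbot : commutator ↥M = ⊥ := by
      rw [_root_.commutator_def, eq_bot_iff, Subgroup.commutator_le]
      intro a _ b _
      rw [Subgroup.mem_bot, commutatorElement_def, hMcomm a b]
      group
    rw [← hΦ z hzM]
    intro hone
    have hmem : (⟨z, hzM⟩ : ↥M) ∈ commutator ↥M := (QuotientGroup.eq_one_iff _).mp hone
    rw [hcommMbot, Subgroup.mem_bot] at hmem
    exact hz1 (congrArg Subtype.val hmem)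
  letI : Fintype (G ⧸ M) := Fintype.ofFinite _
  -- reindexing the transfer product along powers of an element outside M
  have keyProd : ∀ g t : G, g ∈ M → t ∉ M → t ^ p ∈ M →
      ∀ pf : ∀ r : G ⧸ M, r.out⁻¹ * g * r.out ∈ M,
      (∏ r : G ⧸ M, (Abelianization.of : ↥M →* Abelianization ↥M) ⟨r.out⁻¹ * g * r.out, pf r⟩) =
        ∏ i ∈ Finset.range p, Φ ((t ^ i)⁻¹ * g * t ^ i) := by
    intro g t hgM htM htpM pf
    have ht1 : (QuotientGroup.mk t : G ⧸ M) ≠ 1 := by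
      simpa [QuotientGroup.eq_one_iff] using htM
    have htp : (QuotientGroup.mk t : G ⧸ M) ^ p = 1 := by
      rw [← QuotientGroup.mk_pow]
      exact (QuotientGroup.eq_one_iff _).mpr htpM
    have hordt : orderOf (QuotientGroup.mk t : G ⧸ M) = p := by
      rcases hp.eq_one_or_self_of_dvd _ (orderOf_dvd_of_pow_eq_one htp) with h | h
      · exact absurd (orderOf_eq_one_iff.mp h) ht1
      · exact h
    have htopt : Subgroup.zpowers (QuotientGroup.mk t : G ⧸ M) = ⊤ := by
      apply Subgroup.eq_top_of_card_eq
      rw [Nat.card_zpowers, hordt, ← M.index_eq_card, hidxM]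
    have hterm : ∀ r : G ⧸ M,
        (Abelianization.of : ↥M →* Abelianization ↥M) ⟨r.out⁻¹ * g * r.out, pf r⟩ =
          Φ (r.out⁻¹ * g * r.out) := fun r => hΦ _ _
    rw [Finset.prod_congr rfl (fun r _ => hterm r)]
    refine (Finset.prod_nbij (fun i => (QuotientGroup.mk (t ^ i) : G ⧸ M)) ?_ ?_ ?_ ?_).symm
    · intro a _
      exact Finset.mem_univ _
    · intro a ha b hb hab
      simp only [Finset.coe_range, Set.mem_Iio] at ha hb
      have hab2 : (QuotientGroup.mk (t ^ a) : G ⧸ M) = QuotientGroup.mk (t ^ b) := hab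
      have hab' : (QuotientGroup.mk t : G ⧸ M) ^ a = (QuotientGroup.mk t : G ⧸ M) ^ b := by
        rw [← QuotientGroup.mk_pow, ← QuotientGroup.mk_pow, hab2]
      exact pow_injOn_Iio_orderOf (by rwa [hordt]) (by rwa [hordt]) hab'
    · intro r _
      have hmem : r ∈ Subgroup.zpowers (QuotientGroup.mk t : G ⧸ M) := by
        rw [htopt]; trivial
      obtain ⟨n, hn⟩ := (isOfFinOrder_of_finite _).mem_powers_iff_mem_zpowers.mpr hmem
      have hn' : (QuotientGroup.mk t : G ⧸ M) ^ n = r := hn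
      refine ⟨n % p, ?_, ?_⟩
      · simp only [Finset.coe_range, Set.mem_Iio]
        exact Nat.mod_lt _ hp.pos
      · show (QuotientGroup.mk (t ^ (n % p)) : G ⧸ M) = r
        rw [QuotientGroup.mk_pow, ← hn', ← hordt]
        exact pow_mod_orderOf _ _
    · intro i _
      set r : G ⧸ M := QuotientGroup.mk (t ^ i) with hrdef
      have hro : (QuotientGroup.mk r.out : G ⧸ M) = r := QuotientGroup.out_eq' r
      have hmem : (t ^ i)⁻¹ * r.out ∈ M := by
        rw [← QuotientGroup.eq]
        exact hro.symm
      have hw : (t ^ i)⁻¹ * g * t ^ i ∈ M := by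
        simpa using hMnormal.conj_mem g hgM (t ^ i)⁻¹
      have hreq : r.out = t ^ i * ((t ^ i)⁻¹ * r.out) := by group
      have he : r.out⁻¹ * g * r.out =
          ((t ^ i)⁻¹ * r.out)⁻¹ * ((t ^ i)⁻¹ * g * t ^ i) * ((t ^ i)⁻¹ * r.out) := by
        conv_lhs => rw [hreq]
        group
      rw [he, hconjM _ _ hmem hw]
  -- sum of 0,...,p-1 is p * ((p-1)/2)
  obtain ⟨thalf, hthalf⟩ := hodd
  have hsum : (∑ i ∈ Finset.range p, i) = p * thalf := by
    have hg2 := Finset.sum_range_id_mul_two p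
    have he : p - 1 = 2 * thalf := by omega
    rw [he] at hg2
    have he2 : p * (2 * thalf) = (p * thalf) * 2 := by ring
    rw [he2] at hg2
    exact Nat.eq_of_mul_eq_mul_right (by norm_num) hg2
  -- value of the transfer on y
  have hyK : (MonoidHom.transfer (Abelianization.of : ↥M →* Abelianization ↥M)) y = 1 := by
    by_cases hyM : y ∈ M
    · have hxM : x ∉ M := by
        intro hxM
        rcases hnotboth with h | h
        exacts [h hxM, h hyM]
      rw [transferB hMnormal _ hyM]
      rw [keyProd y x hyM hxM (by rw [hxpz]; exact hzM) _]
      have h2 : ∀ i : ℕ, Φ ((x ^ i)⁻¹ * y * x ^ i) = Φ y * Φ z ^ i := by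
        intro i
        rw [hxi i, hΦmul y (z ^ i) hyM (pow_mem hzM i), hΦpow z hzM i]
      rw [Finset.prod_congr rfl (fun i _ => h2 i), Finset.prod_mul_distrib, Finset.prod_const,
        Finset.card_range, Finset.prod_pow_eq_pow_sum, hsum]
      have hΦyp : Φ y ^ p = 1 := by rw [← hΦpow y hyM p, hyp, hΦone]
      have hΦzp : Φ z ^ p = 1 := by rw [← hΦpow z hzM p, hzp, hΦone]
      rw [hΦyp, one_mul, pow_mul, hΦzp, one_pow]
    · rw [transferA Abelianization.of hp hidxM hyM
        (by intro w; rw [hyp]; group) (by rw [hyp]; exact one_mem M)]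
      have h0 : ∀ h : y ^ p ∈ M, (Abelianization.of : ↥M →* Abelianization ↥M) ⟨y ^ p, h⟩ = 1 := by
        intro h
        have he : (⟨y ^ p, h⟩ : ↥M) = 1 := Subtype.ext (by simpa using hyp)
        rw [he, map_one]
      exact h0 _
  -- value of the transfer on x
  have hxK : (MonoidHom.transfer (Abelianization.of : ↥M →* Abelianization ↥M)) x = Φ z := by
    by_cases hxM : x ∈ M
    · have hyM : y ∉ M := by
        intro hyM
        rcases hnotboth with h | h
        exacts [h hxM, h hyM]
      rw [transferB hMnormal _ hxM]
      rw [keyProd x y hxM hyM (by rw [hyp]; exact one_mem M) _]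
      have h2 : ∀ i : ℕ, Φ ((y ^ i)⁻¹ * x * y ^ i) = Φ x * Φ z⁻¹ ^ i := by
        intro i
        rw [hyi i, hΦmul x (z⁻¹ ^ i) hxM (pow_mem (inv_mem hzM) i), hΦpow z⁻¹ (inv_mem hzM) i]
      rw [Finset.prod_congr rfl (fun i _ => h2 i), Finset.prod_mul_distrib, Finset.prod_const,
        Finset.card_range, Finset.prod_pow_eq_pow_sum, hsum]
      have hΦxp : Φ x ^ p = Φ z := by rw [← hΦpow x hxM p, hxpz]
      have hΦzip : Φ z⁻¹ ^ p = 1 := by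
        rw [← hΦpow z⁻¹ (inv_mem hzM) p, inv_pow, hzp, inv_one, hΦone]
      rw [hΦxp, pow_mul, hΦzip, one_pow, mul_one]
    · rw [transferA Abelianization.of hp hidxM hxM
        (by intro w; rw [hxpz]; exact hzc w) (by rw [hxpz]; exact hzM)]
      have h0 : ∀ h : x ^ p ∈ M,
          (Abelianization.of : ↥M →* Abelianization ↥M) ⟨x ^ p, h⟩ = Φ z := by
        intro h
        have he : (⟨x ^ p, h⟩ : ↥M) = ⟨z, hzM⟩ := Subtype.ext hxpz
        rw [he, hΦ]
      exact h0 _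
  -- the subgroup N = ⟨y, [G,G]⟩
  set f := (MonoidHom.transfer (Abelianization.of : ↥M →* Abelianization ↥M)) with hfdef
  set N := Subgroup.closure (insert y (commutator G : Set G)) with hNdef
  have hyN : y ∈ N := Subgroup.subset_closure (Set.mem_insert y _)
  have hcommN : commutator G ≤ N := fun w hw =>
    Subgroup.subset_closure (Set.mem_insert_of_mem _ hw)
  have hzN : z ∈ N := hcommN hzcomm
  haveI hNnormal : N.Normal := mknormal N hcommN
  have hNker : N ≤ f.ker := by
    rw [hNdef, Subgroup.closure_le, Set.insert_subset_iff]
    constructor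
    · rw [SetLike.mem_coe, MonoidHom.mem_ker]
      exact hyK
    · exact fun w hw => Abelianization.commutator_subset_ker f hw
  have hxker : x ∉ f.ker := by
    rw [MonoidHom.mem_ker, hfdef, hxK]
    exact hΦz
  have hNidx : N.index ∣ p := by
    have hxNp : (QuotientGroup.mk x : G ⧸ N) ^ p = 1 := by
      rw [← QuotientGroup.mk_pow]
      exact (QuotientGroup.eq_one_iff _).mpr (by rw [hxpz]; exact hzN)
    have hyN1 : (QuotientGroup.mk y : G ⧸ N) = 1 := (QuotientGroup.eq_one_iff _).mpr hyN
    have hQtop : Subgroup.zpowers (QuotientGroup.mk x : G ⧸ N) = ⊤ := by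
      have hmap := Subgroup.map_top_of_surjective (QuotientGroup.mk' N)
        (QuotientGroup.mk'_surjective N)
      rw [← hgen, MonoidHom.map_closure] at hmap
      rw [← hmap, Set.image_insert_eq, Set.image_singleton]
      have himg : ((QuotientGroup.mk' N) x) = (QuotientGroup.mk x : G ⧸ N) := rfl
      have himg' : ((QuotientGroup.mk' N) y) = (QuotientGroup.mk y : G ⧸ N) := rfl
      rw [himg, himg', hyN1]
      rw [show ({QuotientGroup.mk x, (1 : G ⧸ N)} : Set (G ⧸ N)) =
        {QuotientGroup.mk x} ∪ {1} from rfl]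
      rw [Subgroup.closure_union, Subgroup.closure_singleton_one, sup_bot_eq,
        Subgroup.zpowers_eq_closure]
    calc N.index = Nat.card (G ⧸ N) := N.index_eq_card
      _ = orderOf (QuotientGroup.mk x : G ⧸ N) := by
          rw [← Nat.card_zpowers, hQtop, Subgroup.card_top]
      _ ∣ p := orderOf_dvd_of_pow_eq_one hxNp
  have hkeridx : f.ker.index = p := by
    have hdvd : f.ker.index ∣ p := dvd_trans (Subgroup.index_dvd_of_le hNker) hNidx
    rcases hp.eq_one_or_self_of_dvd _ hdvd with h | h
    · exfalso
      exact hxker ((Subgroup.index_eq_one.mp h).symm ▸ Subgroup.mem_top x)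
    · exact h
  have hNidx' : N.index = p := by
    have hd : f.ker.index ∣ N.index := Subgroup.index_dvd_of_le hNker
    rw [hkeridx] at hd
    exact Nat.dvd_antisymm hNidx hd
  have hcards : Nat.card ↥f.ker = Nat.card ↥N := by
    have h1 := f.ker.card_mul_index
    have h2 := N.card_mul_index
    rw [hkeridx] at h1
    rw [hNidx'] at h2
    exact Nat.eq_of_mul_eq_mul_right hp.pos (h1.trans h2.symm)
  exact (Subgroup.eq_of_le_of_card_ge hNker (le_of_eq hcards)).symm
end

section
/- Let p ≥ 3 be odd and G a metabelian p-group of maximal class of order p^m with m ≥ 4, with maximal subgroups M₁,…,M_{p+1} ordered so that M₁ = χ₂(G) is the two-step centralizer. Then for every i with 2 ≤ i ≤ p+1, the transfer V_i : G/[G,G] → M_i/[M_i,M_i] is the trivial homomorphism, i.e., Ker(V_i) = G/[G,G]. -/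
open Subgroup
open scoped Pointwise
open scoped commutatorElement

section MCTAux

variable {G : Type*} [Group G]

/-- commuting in a quotient group vs commutator membership -/
private lemma MCT_commute_mk_iff (N : Subgroup G) [N.Normal] (a b : G) :
    Commute (a : G ⧸ N) (b : G ⧸ N) ↔ ⁅a, b⁆ ∈ N := by
  rw [← commutatorElement_eq_one_iff_commute]
  have h : (⁅(a : G ⧸ N), (b : G ⧸ N)⁆) = ((⁅a, b⁆ : G) : G ⧸ N) :=
    (map_commutatorElement (QuotientGroup.mk' N) a b).symm
  rw [h, QuotientGroup.eq_one_iff]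

private lemma MCT_conj_eq_comm_mul (T U : G) : T * U * T⁻¹ = ⁅T, U⁆ * U := by
  simp only [commutatorElement_def]; group

/-- key commutator-fixing computation -/
private lemma MCT_commute_commutator (T U V : G)
    (hz : ∀ y : G, Commute ⁅T, U⁆ y)
    (hd : Commute ⁅T, V⁆ (V * U⁻¹ * V⁻¹)) :
    Commute T ⁅U, V⁆ := by
  set z := ⁅T, U⁆ with hzdef
  set d := ⁅T, V⁆ with hddef
  have e3 : d * (V * U⁻¹ * V⁻¹) * d⁻¹ = V * U⁻¹ * V⁻¹ := by
    rw [hd.eq]; group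
  have key : T * ⁅U, V⁆ * T⁻¹ = ⁅U, V⁆ := by
    have e0 : T * ⁅U, V⁆ * T⁻¹ = ⁅T * U * T⁻¹, T * V * T⁻¹⁆ := by
      simp only [commutatorElement_def]; group
    rw [e0, MCT_conj_eq_comm_mul T U, MCT_conj_eq_comm_mul T V, ← hzdef, ← hddef]
    calc ⁅z * U, d * V⁆
        = z * (U * (d * V) * U⁻¹) * (z⁻¹ * (d * V)⁻¹) := by
          simp only [commutatorElement_def]; group
      _ = z * (U * (d * V) * U⁻¹) * ((d * V)⁻¹ * z⁻¹) := by
          rw [((hz ((d * V)⁻¹)).inv_left).eq]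
      _ = z * (U * (d * (V * U⁻¹ * V⁻¹) * d⁻¹)) * z⁻¹ := by group
      _ = z * (U * (V * U⁻¹ * V⁻¹)) * z⁻¹ := by rw [e3]
      _ = z * ⁅U, V⁆ * z⁻¹ := by simp only [commutatorElement_def]; group
      _ = ⁅U, V⁆ * z * z⁻¹ := by rw [(hz ⁅U, V⁆).eq]
      _ = ⁅U, V⁆ := by group
  have := key
  rw [mul_inv_eq_iff_eq_mul] at this
  exact this

end MCTAux

/-- Let `p ≥ 3` be odd and `G` a metabelian `p`-group of maximal class of order
`p^m`, `m ≥ 4`. For every maximal subgroup `M` other than the two-step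
centralizer `χ₂(G) = {g | [g,γ₂(G)] ≤ γ₄(G)}`, the transfer
`V : G/[G,G] → M/[M,M]` is the trivial homomorphism (kernel `⊤` in `G`).
(Here `γ_j(G)` of the paper is `(⊤ : Subgroup G).lowerCentralSeries (j-1)`.) -/
theorem maximal_class_odd_transfer_trivial
    (p : ℕ) (hp : p.Prime) (hodd : Odd p) (h3 : 3 ≤ p)
    (m : ℕ) (hm : 4 ≤ m)
    (G : Type*) [Group G] [Finite G] (hcard : Nat.card G = p ^ m)
    (hclass : (⊤ : Subgroup G).lowerCentralSeries (m - 1) = ⊥ ∧ (⊤ : Subgroup G).lowerCentralSeries (m - 2) ≠ ⊥)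
    (hmet : ∀ a ∈ commutator G, ∀ b ∈ commutator G, Commute a b) :
    ∀ M : Subgroup G, IsCoatom M →
      (M : Set G) ≠
        {g : G | ∀ u ∈ (⊤ : Subgroup G).lowerCentralSeries 1, g⁻¹ * u⁻¹ * g * u ∈ (⊤ : Subgroup G).lowerCentralSeries 3} →
      (MonoidHom.transfer (Abelianization.of : ↥M →* Abelianization ↥M)).ker = ⊤ := by
  intro M hM hne
  haveI : Fact p.Prime := ⟨hp⟩
  have hp1 : 1 < p := hp.one_lt
  -- Step 1 : strictness of the lower central series
  have hstab : ∀ i, (⊤ : Subgroup G).lowerCentralSeries (i + 1) = (⊤ : Subgroup G).lowerCentralSeries i →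
      ∀ j, (⊤ : Subgroup G).lowerCentralSeries (i + j) = (⊤ : Subgroup G).lowerCentralSeries i := by
    intro i hi j
    induction j with
    | zero => rfl
    | succ j ih =>
      have h0 : (⊤ : Subgroup G).lowerCentralSeries (i + j + 1) = ⁅(⊤ : Subgroup G).lowerCentralSeries (i + j), ⊤⁆ := rfl
      rw [show i + (j+1) = (i + j) + 1 from rfl, h0, ih]
      exact hi
  have hstrict : ∀ i, i ≤ m - 2 → (⊤ : Subgroup G).lowerCentralSeries (i + 1) < (⊤ : Subgroup G).lowerCentralSeries i := by
    intro i hi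
    refine lt_of_le_of_ne (Subgroup.lowerCentralSeries_antitone ⊤ (Nat.le_succ i)) ?_
    intro heq
    have h1 := hstab i heq (m - 2 - i)
    have h2 := hstab i heq (m - 1 - i)
    rw [show i + (m - 2 - i) = m - 2 by omega] at h1
    rw [show i + (m - 1 - i) = m - 1 by omega] at h2
    exact hclass.2 (by rw [h1, ← h2, hclass.1])
  -- Step NC : G / γ₂ is not cyclic
  have hNC : ∀ g : G, ¬ ∀ v : G, ∃ z : ℤ, v⁻¹ * g ^ z ∈ (⊤ : Subgroup G).lowerCentralSeries 1 := by
    intro g hgen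
    have hcent : ∀ u ∈ (⊤ : Subgroup G).lowerCentralSeries 1, ∀ y : G ⧸ (⊤ : Subgroup G).lowerCentralSeries 2,
        Commute ((u : G ⧸ (⊤ : Subgroup G).lowerCentralSeries 2)) y := by
      intro u hu y
      obtain ⟨y', rfl⟩ := QuotientGroup.mk_surjective y
      exact (MCT_commute_mk_iff _ u y').2 (commutator_mem_commutator hu (mem_top y'))
    have hle : (⊤ : Subgroup G).lowerCentralSeries 1 ≤ (⊤ : Subgroup G).lowerCentralSeries 2 := by
      rw [Subgroup.top_lowerCentralSeries_one, _root_.commutator_def, commutator_le]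
      intro a _ b _
      obtain ⟨z1, hz1⟩ := hgen a
      obtain ⟨z2, hz2⟩ := hgen b
      have hA : ((a : G ⧸ (⊤ : Subgroup G).lowerCentralSeries 2)) =
          ((g : G ⧸ (⊤ : Subgroup G).lowerCentralSeries 2)) ^ z1 *
            (((a⁻¹ * g ^ z1 : G) : G ⧸ (⊤ : Subgroup G).lowerCentralSeries 2))⁻¹ := by
        rw [← QuotientGroup.mk_zpow, ← QuotientGroup.mk_inv, ← QuotientGroup.mk_mul]
        congr 1; group
      have hB : ((b : G ⧸ (⊤ : Subgroup G).lowerCentralSeries 2)) =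
          ((g : G ⧸ (⊤ : Subgroup G).lowerCentralSeries 2)) ^ z2 *
            (((b⁻¹ * g ^ z2 : G) : G ⧸ (⊤ : Subgroup G).lowerCentralSeries 2))⁻¹ := by
        rw [← QuotientGroup.mk_zpow, ← QuotientGroup.mk_inv, ← QuotientGroup.mk_mul]
        congr 1; group
      have hcomm : Commute ((a : G ⧸ (⊤ : Subgroup G).lowerCentralSeries 2))
          ((b : G ⧸ (⊤ : Subgroup G).lowerCentralSeries 2)) := by
        rw [hA, hB]
        exact Commute.mul_left
          (Commute.mul_right ((Commute.refl _).zpow_zpow z1 z2)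
            ((hcent _ hz2 _).symm.inv_right))
          ((hcent _ hz1 _).inv_left)
      exact (MCT_commute_mk_iff ((⊤ : Subgroup G).lowerCentralSeries 2) a b).1 hcomm
    exact absurd hle (hstrict 1 (by omega)).not_ge
  have hNC' : ∀ g : G, Subgroup.zpowers ((g : G ⧸ (⊤ : Subgroup G).lowerCentralSeries 1)) ≠ ⊤ := by
    intro g htop
    refine hNC g fun v => ?_
    have hv : (v : G ⧸ (⊤ : Subgroup G).lowerCentralSeries 1) ∈ zpowers ((g : G ⧸ (⊤ : Subgroup G).lowerCentralSeries 1)) :=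
      htop ▸ Subgroup.mem_top _
    obtain ⟨z, hz⟩ := Subgroup.mem_zpowers_iff.1 hv
    refine ⟨z, QuotientGroup.eq.1 ?_⟩
    rw [QuotientGroup.mk_zpow]; exact hz.symm
  -- Step 2 : cards
  obtain ⟨hn1, hn2, hn3, hQ0⟩ :
      Nat.card ((⊤ : Subgroup G).lowerCentralSeries 1) = p ^ (m - 2) ∧
      Nat.card ((⊤ : Subgroup G).lowerCentralSeries 2) = p ^ (m - 3) ∧
      Nat.card ((⊤ : Subgroup G).lowerCentralSeries 3) = p ^ (m - 4) ∧
      Nat.card (G ⧸ (⊤ : Subgroup G).lowerCentralSeries 1) = p ^ 2 := by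
    have hcard_dvd : ∀ i : ℕ, Nat.card ((⊤ : Subgroup G).lowerCentralSeries i) ∣ p ^ m := by
      intro i
      have h := Subgroup.card_dvd_of_le (le_top : (⊤ : Subgroup G).lowerCentralSeries i ≤ ⊤)
      rwa [Subgroup.card_top, hcard] at h
    obtain ⟨e, he⟩ : ∃ e : ℕ → ℕ, ∀ i, Nat.card ((⊤ : Subgroup G).lowerCentralSeries i) = p ^ e i := by
      choose e _ he using fun i => (Nat.dvd_prime_pow hp).1 (hcard_dvd i)
      exact ⟨e, he⟩
    have hclt : ∀ i, i ≤ m - 2 → e (i+1) < e i := by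
      intro i hi
      have hlt := hstrict i hi
      have hdvd := Subgroup.card_dvd_of_le hlt.le
      have hneq : Nat.card ((⊤ : Subgroup G).lowerCentralSeries (i+1)) ≠ Nat.card ((⊤ : Subgroup G).lowerCentralSeries i) :=
        fun h => hlt.ne (Subgroup.eq_of_le_of_card_ge hlt.le h.ge)
      have hlt2 : Nat.card ((⊤ : Subgroup G).lowerCentralSeries (i+1)) < Nat.card ((⊤ : Subgroup G).lowerCentralSeries i) :=
        lt_of_le_of_ne (Nat.le_of_dvd Nat.card_pos hdvd) hneq
      rw [he, he] at hlt2
      exact (Nat.pow_lt_pow_iff_right hp1).1 hlt2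
    have hlast : e (m - 1) = 0 := by
      have h1 : Nat.card ((⊤ : Subgroup G).lowerCentralSeries (m-1)) = 1 := by
        rw [hclass.1]; exact Subgroup.card_bot
      have h2 : p ^ e (m - 1) = p ^ 0 := by rw [← he (m - 1), h1, pow_zero]
      exact Nat.pow_right_injective hp.two_le h2
    have hdesc : ∀ d, d ≤ m - 2 → d ≤ e (m - 1 - d) := by
      intro d
      induction d with
      | zero => intro _; omega
      | succ d ih =>
        intro hd
        have h1 : m - 1 - (d+1) = m - 2 - d := by omega
        have h2 : m - 2 - d + 1 = m - 1 - d := by omega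
        have h3 := hclt (m - 2 - d) (by omega)
        rw [h2] at h3
        have h4 := ih (by omega)
        rw [h1]; omega
    have hquot := Subgroup.card_eq_card_quotient_mul_card_subgroup ((⊤ : Subgroup G).lowerCentralSeries 1)
    obtain ⟨f, hf, hfe⟩ : ∃ f ≤ m, Nat.card (G ⧸ (⊤ : Subgroup G).lowerCentralSeries 1) = p ^ f := by
      refine (Nat.dvd_prime_pow hp).1 ⟨Nat.card ((⊤ : Subgroup G).lowerCentralSeries 1), ?_⟩
      rw [← hcard]; exact hquot
    have hm_eq : m = f + e 1 := by
      have h := hquot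
      rw [hcard, hfe, he 1, ← pow_add] at h
      exact Nat.pow_right_injective hp.two_le h
    have hf0 : f ≠ 0 := by
      intro h0
      have he1 : e 1 = m := by omega
      have : (⊤ : Subgroup G).lowerCentralSeries 1 = ⊤ := by
        apply Subgroup.eq_top_of_card_eq
        rw [he 1, he1, hcard]
      have hlt := hstrict 0 (by omega)
      rw [show (0:ℕ)+1 = 1 from rfl, Subgroup.lowerCentralSeries_zero] at hlt
      exact absurd this hlt.ne
    have hf1 : f ≠ 1 := by
      intro h1
      have hcQ : Nat.card (G ⧸ (⊤ : Subgroup G).lowerCentralSeries 1) = p := by rw [hfe, h1, pow_one]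
      haveI := isCyclic_of_prime_card hcQ
      obtain ⟨x, hx⟩ := IsCyclic.exists_generator (α := G ⧸ (⊤ : Subgroup G).lowerCentralSeries 1)
      obtain ⟨g, rfl⟩ := QuotientGroup.mk_surjective x
      exact hNC' g ((Subgroup.eq_top_iff' _).2 hx)
    have he1 : e 1 = m - 2 := by
      have h1 : m - 2 ≤ e 1 := by
        have := hdesc (m - 2) (le_refl _)
        rwa [show m - 1 - (m - 2) = 1 by omega] at this
      omega
    have he2 : e 2 = m - 3 := by
      have h1 : m - 3 ≤ e 2 := by
        have := hdesc (m - 3) (by omega)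
        rwa [show m - 1 - (m - 3) = 2 by omega] at this
      have h2 : e 2 < e 1 := hclt 1 (by omega)
      omega
    have he3 : e 3 = m - 4 := by
      have h1 : m - 4 ≤ e 3 := by
        have := hdesc (m - 4) (by omega)
        rwa [show m - 1 - (m - 4) = 3 by omega] at this
      have h2 : e 3 < e 2 := hclt 2 (by omega)
      omega
    refine ⟨by rw [he 1, he1], by rw [he 2, he2], by rw [he 3, he3], ?_⟩
    rw [hfe, show f = 2 by omega]
  -- Step 3 : exponent p abelianization
  have hC1 : ∀ g : G, g ^ p ∈ (⊤ : Subgroup G).lowerCentralSeries 1 := by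
    intro g
    have hdvd : orderOf ((g : G ⧸ (⊤ : Subgroup G).lowerCentralSeries 1)) ∣ p ^ 2 := by
      rw [← hQ0]; exact orderOf_dvd_natCard _
    obtain ⟨j, hj2, hj⟩ := (Nat.dvd_prime_pow hp).1 hdvd
    have hjne : j ≠ 2 := by
      intro h2
      refine hNC' g (Subgroup.eq_top_of_card_eq _ ?_)
      rw [Nat.card_zpowers, hj, h2, hQ0]
    have hdvd2 : orderOf ((g : G ⧸ (⊤ : Subgroup G).lowerCentralSeries 1)) ∣ p := by
      rw [hj]
      exact dvd_trans (pow_dvd_pow p (by omega : j ≤ 1)) (by rw [pow_one])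
    have hone : ((g : G ⧸ (⊤ : Subgroup G).lowerCentralSeries 1)) ^ p = 1 := orderOf_dvd_iff_pow_eq_one.1 hdvd2
    rw [← QuotientGroup.mk_pow] at hone
    exact (QuotientGroup.eq_one_iff _).1 hone
  -- Step 4 : γ₂/γ₃ generated by any element outside γ₃
  have hC2b : ∀ u ∈ (⊤ : Subgroup G).lowerCentralSeries 1, u ∉ (⊤ : Subgroup G).lowerCentralSeries 2 →
      (⊤ : Subgroup G).lowerCentralSeries 1 ≤ zpowers u ⊔ (⊤ : Subgroup G).lowerCentralSeries 2 := by
    intro u hu hnot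
    have hTle : zpowers u ⊔ (⊤ : Subgroup G).lowerCentralSeries 2 ≤ (⊤ : Subgroup G).lowerCentralSeries 1 :=
      sup_le (zpowers_le.2 hu) (Subgroup.lowerCentralSeries_antitone ⊤ (by omega))
    have h2T : (⊤ : Subgroup G).lowerCentralSeries 2 ≤ zpowers u ⊔ (⊤ : Subgroup G).lowerCentralSeries 2 := le_sup_right
    obtain ⟨a, ha⟩ := Subgroup.card_dvd_of_le h2T
    have hdvd1 := Subgroup.card_dvd_of_le hTle
    rw [hn1, ha, hn2, show m - 2 = (m-3)+1 by omega, pow_succ] at hdvd1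
    have hadvd : a ∣ p := (Nat.mul_dvd_mul_iff_left (Nat.pos_of_ne_zero (by positivity))).1 hdvd1
    rcases hp.eq_one_or_self_of_dvd a hadvd with h1 | hpa
    · exfalso
      have hceq : Nat.card (zpowers u ⊔ (⊤ : Subgroup G).lowerCentralSeries 2 : Subgroup G)
          = Nat.card ((⊤ : Subgroup G).lowerCentralSeries 2) := by rw [ha, h1, mul_one]
      have := Subgroup.eq_of_le_of_card_ge h2T hceq.le
      exact hnot (this ▸ Subgroup.mem_sup_left (Subgroup.mem_zpowers u))
    · have hceq : Nat.card ((⊤ : Subgroup G).lowerCentralSeries 1)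
          ≤ Nat.card (zpowers u ⊔ (⊤ : Subgroup G).lowerCentralSeries 2 : Subgroup G) := by
        rw [ha, hpa, hn1, hn2, show m - 2 = (m-3)+1 by omega, pow_succ]
      exact (Subgroup.eq_of_le_of_card_ge hTle hceq).ge
  -- Step 5 : the two-step centralizer χ₂
  set Chi2 : Subgroup G :=
    Subgroup.comap (QuotientGroup.mk' ((⊤ : Subgroup G).lowerCentralSeries 3))
      (Subgroup.centralizer
        ((QuotientGroup.mk' ((⊤ : Subgroup G).lowerCentralSeries 3)) '' ((⊤ : Subgroup G).lowerCentralSeries 1))) with hChidef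
  have hChiMem : ∀ g : G, g ∈ Chi2 ↔
      ∀ u ∈ (⊤ : Subgroup G).lowerCentralSeries 1, ⁅g, u⁆ ∈ (⊤ : Subgroup G).lowerCentralSeries 3 := by
    intro g
    rw [hChidef, Subgroup.mem_comap, Subgroup.mem_centralizer_iff]
    constructor
    · intro h u hu
      have h2 := h _ ⟨u, hu, rfl⟩
      exact (MCT_commute_mk_iff _ g u).1 (Commute.symm h2)
    · rintro h y ⟨u, hu, rfl⟩
      exact ((MCT_commute_mk_iff _ g u).2 (h u hu)).symm
  have hChiSet : (Chi2 : Set G) =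
      {g : G | ∀ u ∈ (⊤ : Subgroup G).lowerCentralSeries 1, g⁻¹ * u⁻¹ * g * u ∈ (⊤ : Subgroup G).lowerCentralSeries 3} := by
    ext g
    simp only [SetLike.mem_coe, Set.mem_setOf_eq, hChiMem g]
    constructor
    · intro h u hu
      have hc : Commute ((g : G ⧸ (⊤ : Subgroup G).lowerCentralSeries 3)) ((u : G ⧸ (⊤ : Subgroup G).lowerCentralSeries 3)) :=
        (MCT_commute_mk_iff _ g u).2 (h u hu)
      have hc2 := hc.inv_inv
      rw [← QuotientGroup.mk_inv, ← QuotientGroup.mk_inv] at hc2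
      have := (MCT_commute_mk_iff _ g⁻¹ u⁻¹).1 hc2
      simpa [commutatorElement_def] using this
    · intro h u hu
      have h2 := h u⁻¹ (inv_mem hu)
      have h3 : ⁅g⁻¹, u⁆ ∈ (⊤ : Subgroup G).lowerCentralSeries 3 := by
        simpa [commutatorElement_def] using h2
      have hc : Commute ((g⁻¹ : G) : G ⧸ (⊤ : Subgroup G).lowerCentralSeries 3)
          ((u : G ⧸ (⊤ : Subgroup G).lowerCentralSeries 3)) := (MCT_commute_mk_iff _ g⁻¹ u).2 h3
      rw [QuotientGroup.mk_inv] at hc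
      have hc2 := hc.inv_left
      rw [inv_inv] at hc2
      exact (MCT_commute_mk_iff _ g u).1 hc2
  have hL1Chi : (⊤ : Subgroup G).lowerCentralSeries 1 ≤ Chi2 := by
    intro u hu
    rw [hChiMem]
    intro v hv
    have hc : Commute u v := by
      refine hmet u ?_ v ?_ <;> rwa [← Subgroup.top_lowerCentralSeries_one]
    rw [commutatorElement_eq_one_iff_commute.2 hc]
    exact one_mem _
  have hChiNe : Chi2 ≠ ⊤ := by
    intro htop
    have hle : (⊤ : Subgroup G).lowerCentralSeries 2 ≤ (⊤ : Subgroup G).lowerCentralSeries 3 := by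
      rw [show (⊤ : Subgroup G).lowerCentralSeries 2 = ⁅(⊤ : Subgroup G).lowerCentralSeries 1, ⊤⁆ from rfl, commutator_le]
      intro u hu g _
      have h1 := (hChiMem g).1 (htop ▸ Subgroup.mem_top g) u hu
      rw [← commutatorElement_inv g u]
      exact inv_mem h1
    exact absurd hle (hstrict 2 (by omega)).not_ge
  -- Step 6 : two-step centralizer property at all levels
  have hA : ∀ i, 1 ≤ i → ∀ t ∈ Chi2, ∀ u ∈ (⊤ : Subgroup G).lowerCentralSeries i,
      ⁅t, u⁆ ∈ (⊤ : Subgroup G).lowerCentralSeries (i + 2) := by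
    intro i hi
    induction i, hi using Nat.le_induction with
    | base => intro t ht u hu; exact (hChiMem t).1 ht u hu
    | succ i hi ih =>
      intro t ht u hu
      rw [show i + 1 + 2 = i + 3 from by omega]
      rw [← MCT_commute_mk_iff ((⊤ : Subgroup G).lowerCentralSeries (i+3)) t u]
      have hsub : Subgroup.map (QuotientGroup.mk' ((⊤ : Subgroup G).lowerCentralSeries (i+3)))
          ((⊤ : Subgroup G).lowerCentralSeries (i+1))
          ≤ Subgroup.centralizer {((t : G ⧸ (⊤ : Subgroup G).lowerCentralSeries (i+3)))} := by
        rw [show (⊤ : Subgroup G).lowerCentralSeries (i+1) = ⁅(⊤ : Subgroup G).lowerCentralSeries i, ⊤⁆ from rfl,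
          Subgroup.map_commutator, commutator_le]
        rintro x ⟨u', hu', rfl⟩ y ⟨g', -, rfl⟩
        rw [Subgroup.mem_centralizer_iff]
        rintro w hw
        rw [Set.mem_singleton_iff] at hw
        subst hw
        have hcomm : Commute ((t : G ⧸ (⊤ : Subgroup G).lowerCentralSeries (i+3)))
            ⁅(QuotientGroup.mk' ((⊤ : Subgroup G).lowerCentralSeries (i+3))) u',
              (QuotientGroup.mk' ((⊤ : Subgroup G).lowerCentralSeries (i+3))) g'⁆ := by
          apply MCT_commute_commutator
          · intro y
            obtain ⟨y', rfl⟩ := QuotientGroup.mk_surjective y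
            have h1 : (⁅(t : G ⧸ (⊤ : Subgroup G).lowerCentralSeries (i+3)),
                (QuotientGroup.mk' ((⊤ : Subgroup G).lowerCentralSeries (i+3))) u'⁆)
                = ((⁅t, u'⁆ : G) : G ⧸ (⊤ : Subgroup G).lowerCentralSeries (i+3)) :=
              (map_commutatorElement (QuotientGroup.mk' _) t u').symm
            rw [h1]
            refine (MCT_commute_mk_iff _ _ _).2 ?_
            have h2 : ⁅t, u'⁆ ∈ (⊤ : Subgroup G).lowerCentralSeries (i+2) := ih t ht u' hu'
            exact commutator_mem_commutator h2 (mem_top y')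
          · have h1 : (⁅(t : G ⧸ (⊤ : Subgroup G).lowerCentralSeries (i+3)),
                (QuotientGroup.mk' ((⊤ : Subgroup G).lowerCentralSeries (i+3))) g'⁆)
                = ((⁅t, g'⁆ : G) : G ⧸ (⊤ : Subgroup G).lowerCentralSeries (i+3)) :=
              (map_commutatorElement (QuotientGroup.mk' _) t g').symm
            rw [h1]
            have h2 : ((QuotientGroup.mk' ((⊤ : Subgroup G).lowerCentralSeries (i+3))) g'
                  * ((QuotientGroup.mk' ((⊤ : Subgroup G).lowerCentralSeries (i+3))) u')⁻¹
                  * ((QuotientGroup.mk' ((⊤ : Subgroup G).lowerCentralSeries (i+3))) g')⁻¹)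
                = ((g' * u'⁻¹ * g'⁻¹ : G) : G ⧸ (⊤ : Subgroup G).lowerCentralSeries (i+3)) := by
              rfl
            rw [h2]
            have hcG : Commute (⁅t, g'⁆ : G) (g' * u'⁻¹ * g'⁻¹ : G) := by
              refine hmet _ ?_ _ ?_
              · rw [_root_.commutator_def]
                exact commutator_mem_commutator (mem_top t) (mem_top g')
              · rw [← Subgroup.top_lowerCentralSeries_one]
                refine Subgroup.lowerCentralSeries_antitone ⊤ hi ?_
                exact (Subgroup.lowerCentralSeries_normal ⊤ i).conj_mem _ (inv_mem hu') g'
            exact hcG.map (QuotientGroup.mk' _)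
        exact hcomm.eq
      have hmem : ((u : G ⧸ (⊤ : Subgroup G).lowerCentralSeries (i+3)))
          ∈ Subgroup.centralizer {((t : G ⧸ (⊤ : Subgroup G).lowerCentralSeries (i+3)))} :=
        hsub ⟨u, hu, rfl⟩
      rw [Subgroup.mem_centralizer_iff] at hmem
      exact hmem _ (Set.mem_singleton _)
  -- Step 7 : index of χ₂ is p : decomposition G = χ₂⟨s⟩
  obtain ⟨w, hw1, hw2⟩ := SetLike.exists_of_lt (hstrict 1 (by omega))
  have hL2mem : ∀ g : G, ⁅g, w⁆ ∈ (⊤ : Subgroup G).lowerCentralSeries 2 := by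
    intro g
    rw [← commutatorElement_inv w g]
    exact inv_mem (commutator_mem_commutator hw1 (mem_top g))
  have hL2comm : ∀ a b : G, a ∈ (⊤ : Subgroup G).lowerCentralSeries 2 → b ∈ (⊤ : Subgroup G).lowerCentralSeries 2 →
      Commute a b := by
    intro a b ha hb
    refine hmet a ?_ b ?_ <;> rw [← Subgroup.top_lowerCentralSeries_one] <;>
      exact Subgroup.lowerCentralSeries_antitone ⊤ (Nat.le_succ 1) ‹_›
  have hFmul : ∀ a b : G, ((⁅a * b, w⁆ : G) : G ⧸ (⊤ : Subgroup G).lowerCentralSeries 3)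
      = ((⁅a, w⁆ : G) : G ⧸ (⊤ : Subgroup G).lowerCentralSeries 3) *
        ((⁅b, w⁆ : G) : G ⧸ (⊤ : Subgroup G).lowerCentralSeries 3) := by
    intro a b
    have hid : ⁅a * b, w⁆ = (a * ⁅b, w⁆ * a⁻¹) * ⁅a, w⁆ := by
      simp only [commutatorElement_def]; group
    have h1 : ((a * ⁅b, w⁆ * a⁻¹ : G) : G ⧸ (⊤ : Subgroup G).lowerCentralSeries 3)
        = ((⁅b, w⁆ : G) : G ⧸ (⊤ : Subgroup G).lowerCentralSeries 3) := by
      rw [QuotientGroup.eq]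
      have hx : (a * ⁅b, w⁆ * a⁻¹)⁻¹ * ⁅b, w⁆ = ⁅a, ⁅b, w⁆⁻¹⁆ := by
        simp only [commutatorElement_def]; group
      rw [hx, ← commutatorElement_inv]
      exact inv_mem (commutator_mem_commutator (inv_mem (hL2mem b)) (mem_top a))
    rw [hid, QuotientGroup.mk_mul, h1]
    exact ((hL2comm _ _ (hL2mem b) (hL2mem a)).map (QuotientGroup.mk' ((⊤ : Subgroup G).lowerCentralSeries 3))).eq
  set Ffun : G →* G ⧸ (⊤ : Subgroup G).lowerCentralSeries 3 :=
    MonoidHom.mk' (fun g => ((⁅g, w⁆ : G) : G ⧸ (⊤ : Subgroup G).lowerCentralSeries 3)) hFmul with hFdef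
  have hFker : ∀ g : G, Ffun g = 1 ↔ g ∈ Chi2 := by
    intro g
    have hF1 : Ffun g = 1 ↔ ⁅g, w⁆ ∈ (⊤ : Subgroup G).lowerCentralSeries 3 :=
      QuotientGroup.eq_one_iff (N := (⊤ : Subgroup G).lowerCentralSeries 3) ⁅g, w⁆
    rw [hF1]
    constructor
    · intro h
      rw [hChiMem]
      intro u hu
      have hC2 : u ∈ (↑(zpowers w) * ↑((⊤ : Subgroup G).lowerCentralSeries 2) : Set G) := by
        rw [← Subgroup.mul_normal (zpowers w) ((⊤ : Subgroup G).lowerCentralSeries 2)]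
        exact hC2b w hw1 hw2 hu
      rw [Set.mem_mul] at hC2
      obtain ⟨x, hx, y, hy, rfl⟩ := hC2
      obtain ⟨z, rfl⟩ := Subgroup.mem_zpowers_iff.1 hx
      have hcw : Commute ((g : G ⧸ (⊤ : Subgroup G).lowerCentralSeries 3)) ((w : G ⧸ (⊤ : Subgroup G).lowerCentralSeries 3)) :=
        (MCT_commute_mk_iff _ g w).2 h
      have hcy : Commute ((g : G ⧸ (⊤ : Subgroup G).lowerCentralSeries 3)) ((y : G ⧸ (⊤ : Subgroup G).lowerCentralSeries 3)) := by
        refine (MCT_commute_mk_iff _ g y).2 ?_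
        rw [← commutatorElement_inv y g]
        exact inv_mem (commutator_mem_commutator hy (mem_top g))
      refine (MCT_commute_mk_iff ((⊤ : Subgroup G).lowerCentralSeries 3) g (w ^ z * y)).1 ?_
      rw [QuotientGroup.mk_mul, QuotientGroup.mk_zpow]
      exact Commute.mul_right (hcw.zpow_right z) hcy
    · intro h
      exact (hChiMem g).1 h w hw1
  have hVcard : Nat.card (Subgroup.map (QuotientGroup.mk' ((⊤ : Subgroup G).lowerCentralSeries 3))
      ((⊤ : Subgroup G).lowerCentralSeries 2)) = p := by
    set f := (QuotientGroup.mk' ((⊤ : Subgroup G).lowerCentralSeries 3)).comp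
      ((⊤ : Subgroup G).lowerCentralSeries 2).subtype with hfdef
    have hrange : f.range = Subgroup.map (QuotientGroup.mk' ((⊤ : Subgroup G).lowerCentralSeries 3))
        ((⊤ : Subgroup G).lowerCentralSeries 2) := by
      rw [hfdef, MonoidHom.range_comp, Subgroup.range_subtype]
    have hker : f.ker = ((⊤ : Subgroup G).lowerCentralSeries 3).subgroupOf ((⊤ : Subgroup G).lowerCentralSeries 2) := by
      rw [hfdef, ← MonoidHom.comap_ker, QuotientGroup.ker_mk']
      rfl
    have hcard2 := Subgroup.card_eq_card_quotient_mul_card_subgroup f.ker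
    have e1 : Nat.card (((⊤ : Subgroup G).lowerCentralSeries 2) ⧸ f.ker) = Nat.card f.range :=
      Nat.card_congr (QuotientGroup.quotientKerEquivRange f).toEquiv
    have e2 : Nat.card f.ker = Nat.card ((⊤ : Subgroup G).lowerCentralSeries 3) := by
      rw [hker]
      exact Nat.card_congr (Subgroup.subgroupOfEquivOfLe
        (Subgroup.lowerCentralSeries_antitone ⊤ (by omega))).toEquiv
    rw [e1, e2, hn2, hn3, hrange] at hcard2
    have hpos : (0:ℕ) < p ^ (m - 4) := by positivity
    have harith : p ^ (m - 3) = p * p ^ (m - 4) := by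
      rw [← pow_succ']
      congr 1; omega
    rw [harith] at hcard2
    exact (Nat.eq_of_mul_eq_mul_right hpos hcard2.symm)
  have hdec : ∀ s, s ∉ Chi2 → ∀ g : G, ∃ t ∈ Chi2, ∃ z : ℤ, g = t * s ^ z := by
    intro s hs g
    have hFs : Ffun s ≠ 1 := fun h => hs ((hFker s).1 h)
    have hFsV : Ffun s ∈ Subgroup.map (QuotientGroup.mk' ((⊤ : Subgroup G).lowerCentralSeries 3))
        ((⊤ : Subgroup G).lowerCentralSeries 2) := ⟨⁅s, w⁆, hL2mem s, rfl⟩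
    have hord : orderOf (Ffun s) = p := by
      have hdvd : orderOf (Ffun s) ∣ p := by
        rw [← hVcard]
        exact Subgroup.orderOf_dvd_natCard _ hFsV
      exact (hp.eq_one_or_self_of_dvd _ hdvd).resolve_left
        (fun h1 => hFs (orderOf_eq_one_iff.1 h1))
    have hzp : zpowers (Ffun s) = Subgroup.map (QuotientGroup.mk' ((⊤ : Subgroup G).lowerCentralSeries 3))
        ((⊤ : Subgroup G).lowerCentralSeries 2) := by
      apply Subgroup.eq_of_le_of_card_ge (zpowers_le.2 hFsV)
      rw [hVcard, Nat.card_zpowers, hord]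
    have hgV : Ffun g ∈ zpowers (Ffun s) := by
      rw [hzp]; exact ⟨⁅g, w⁆, hL2mem g, rfl⟩
    obtain ⟨z, hz⟩ := Subgroup.mem_zpowers_iff.1 hgV
    refine ⟨g * (s ^ z)⁻¹, ?_, z, by group⟩
    apply (hFker _).1
    rw [map_mul, map_inv, map_zpow, hz]
    exact mul_inv_cancel _
  -- Step 8 : p-th powers of elements outside χ₂ lie in γ₃
  have hB : ∀ s, s ∉ Chi2 → s ^ p ∈ (⊤ : Subgroup G).lowerCentralSeries 2 := by
    intro s hs
    by_contra hnot
    apply hs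
    rw [hChiMem]
    intro u hu
    have hC2 : u ∈ (↑(zpowers (s ^ p)) * ↑((⊤ : Subgroup G).lowerCentralSeries 2) : Set G) := by
      rw [← Subgroup.mul_normal (zpowers (s ^ p)) ((⊤ : Subgroup G).lowerCentralSeries 2)]
      exact hC2b (s ^ p) (hC1 s) hnot hu
    rw [Set.mem_mul] at hC2
    obtain ⟨x, hx, y, hy, rfl⟩ := hC2
    obtain ⟨z, rfl⟩ := Subgroup.mem_zpowers_iff.1 hx
    refine (MCT_commute_mk_iff _ s ((s ^ p) ^ z * y)).1 ?_
    rw [QuotientGroup.mk_mul, QuotientGroup.mk_zpow, QuotientGroup.mk_pow]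
    refine Commute.mul_right (((Commute.refl _).pow_right p).zpow_right z) ?_
    refine (MCT_commute_mk_iff _ s y).2 ?_
    rw [← commutatorElement_inv y s]
    exact inv_mem (commutator_mem_commutator hy (mem_top s))
  -- Step 9 : coatom facts
  haveI hMnormal : M.Normal := by
    haveI : Group.IsNilpotent G := Subgroup.nilpotent_iff_lowerCentralSeries.2 ⟨m - 1, hclass.1⟩
    exact NormalizerCondition.normal_of_coatom M normalizerCondition_of_isNilpotent hM
  have hsubquot : ∀ K : Subgroup (G ⧸ M), K = ⊥ ∨ K = ⊤ := by
    intro K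
    have hker : M ≤ Subgroup.comap (QuotientGroup.mk' M) K := by
      intro x hx
      rw [Subgroup.mem_comap]
      have h1 : (QuotientGroup.mk' M) x = 1 := (QuotientGroup.eq_one_iff x).2 hx
      rw [h1]; exact one_mem K
    rcases eq_or_lt_of_le hker with h | h
    · left
      have h2 := Subgroup.map_comap_eq_self_of_surjective (QuotientGroup.mk'_surjective M) K
      rw [← h2, ← h]
      rw [eq_bot_iff]
      rintro y ⟨x, hx, rfl⟩
      rw [Subgroup.mem_bot]
      exact (QuotientGroup.eq_one_iff x).2 hx
    · right
      have h2 := hM.2 _ h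
      have h3 := Subgroup.map_comap_eq_self_of_surjective (QuotientGroup.mk'_surjective M) K
      rw [← h3, h2]
      exact Subgroup.map_top_of_surjective _ (QuotientGroup.mk'_surjective M)
  have hnt : Nontrivial (G ⧸ M) := by
    obtain ⟨x, -, hx⟩ := SetLike.exists_of_lt (lt_top_iff_ne_top.2 hM.1)
    refine ⟨(x : G ⧸ M), 1, ?_⟩
    intro h
    exact hx ((QuotientGroup.eq_one_iff x).1 h)
  haveI := hnt
  have hL1M : (⊤ : Subgroup G).lowerCentralSeries 1 ≤ M := by
    have hpg : IsPGroup p (G ⧸ M) := (IsPGroup.of_card hcard).to_quotient M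
    haveI := hpg.center_nontrivial
    obtain ⟨z, hz⟩ := exists_ne (1 : Subgroup.center (G ⧸ M))
    have hcne : Subgroup.center (G ⧸ M) ≠ ⊥ := by
      intro h
      exact hz (Subtype.ext ((Subgroup.eq_bot_iff_forall _).1 h _ z.2))
    have hctop : Subgroup.center (G ⧸ M) = ⊤ := (hsubquot _).resolve_left hcne
    rw [Subgroup.top_lowerCentralSeries_one, _root_.commutator_def, commutator_le]
    intro a _ b _
    refine (QuotientGroup.eq_one_iff _).1 ?_
    have h1 : ((⁅a, b⁆ : G) : G ⧸ M) = ⁅(a : G ⧸ M), (b : G ⧸ M)⁆ :=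
      map_commutatorElement (QuotientGroup.mk' M) a b
    rw [h1, commutatorElement_eq_one_iff_commute]
    have hbz : (b : G ⧸ M) ∈ Subgroup.center (G ⧸ M) := hctop ▸ Subgroup.mem_top _
    exact Subgroup.mem_center_iff.1 hbz _
  have hMidx : Nat.card (G ⧸ M) = p := by
    have hdvd : Nat.card (G ⧸ M) ∣ p ^ m := by
      refine ⟨Nat.card M, ?_⟩
      rw [← hcard]
      exact Subgroup.card_eq_card_quotient_mul_card_subgroup M
    have h1 : 1 < Nat.card (G ⧸ M) := Finite.one_lt_card_iff_nontrivial.2 hnt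
    have hpd : p ∣ Nat.card (G ⧸ M) := by
      obtain ⟨k, hk, hke⟩ := (Nat.dvd_prime_pow hp).1 hdvd
      rcases Nat.eq_zero_or_pos k with h0 | h0
      · rw [h0, pow_zero] at hke; omega
      · rw [hke]; exact dvd_pow_self p (by omega)
    obtain ⟨x, hx⟩ := exists_prime_orderOf_dvd_card' p hpd
    have hxne : x ≠ 1 := by
      intro h
      rw [h, orderOf_one] at hx
      omega
    have htop : zpowers x = ⊤ := by
      refine (hsubquot _).resolve_left ?_
      intro h
      exact hxne (Subgroup.mem_bot.1 (h ▸ Subgroup.mem_zpowers x))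
    calc Nat.card (G ⧸ M) = Nat.card (⊤ : Subgroup (G ⧸ M)) := Subgroup.card_top.symm
      _ = Nat.card (zpowers x) := by rw [htop]
      _ = p := by rw [Nat.card_zpowers, hx]
  have hpowM : ∀ g : G, g ∉ M → ∀ k : ℕ, g ^ k ∈ M → p ∣ k := by
    intro g hg k hk
    have h1 : ((g : G ⧸ M)) ^ k = 1 := by
      rw [← QuotientGroup.mk_pow]
      exact (QuotientGroup.eq_one_iff _).2 hk
    have horder : orderOf ((g : G ⧸ M)) = p := by
      have hne1 : (g : G ⧸ M) ≠ 1 := fun h => hg ((QuotientGroup.eq_one_iff g).1 h)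
      have hd : orderOf ((g : G ⧸ M)) ∣ p := by
        rw [← hMidx]; exact orderOf_dvd_natCard _
      exact (hp.eq_one_or_self_of_dvd _ hd).resolve_left
        (fun h => hne1 (orderOf_eq_one_iff.1 h))
    exact horder ▸ orderOf_dvd_of_pow_eq_one h1
  -- Step 10 : a generator of M outside χ₂
  obtain ⟨s, hsM, hsChi⟩ : ∃ s ∈ M, s ∉ Chi2 := by
    by_contra hcon
    push_neg at hcon
    have hle : M ≤ Chi2 := hcon
    rcases eq_or_lt_of_le hle with heq | hlt
    · exact hne (by rw [← hChiSet, heq])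
    · exact hChiNe (hM.2 _ hlt)
  -- Step 11 : γ₃ ≤ [M,M]
  haveI hMMn : (⁅M, M⁆).Normal := Subgroup.commutator_normal M M
  have hD : (⊤ : Subgroup G).lowerCentralSeries 2 ≤ ⁅M, M⁆ := by
    have hstep : ∀ i, 1 ≤ i →
        (⊤ : Subgroup G).lowerCentralSeries (i+1) ≤ ⁅M, M⁆ ⊔ (⊤ : Subgroup G).lowerCentralSeries (i+2) := by
      intro i hi
      rw [show (⊤ : Subgroup G).lowerCentralSeries (i+1) = ⁅(⊤ : Subgroup G).lowerCentralSeries i, ⊤⁆ from rfl, commutator_le]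
      intro u hu g _
      obtain ⟨t, ht, z, rfl⟩ := hdec s hsChi g
      have hidt : ⁅u, t * s ^ z⁆ = ⁅u, t⁆ * (t * ⁅u, s ^ z⁆ * t⁻¹) := by
        simp only [commutatorElement_def]; group
      rw [hidt]
      refine mul_mem ?_ ?_
      · refine le_sup_right (α := Subgroup G) ?_
        rw [← commutatorElement_inv t u]
        exact inv_mem (hA i hi t ht u hu)
      · have hcm : ⁅u, s ^ z⁆ ∈ ⁅M, M⁆ :=
          commutator_mem_commutator (hL1M (Subgroup.lowerCentralSeries_antitone ⊤ hi hu)) (M.zpow_mem hsM z)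
        haveI : (⁅M, M⁆ ⊔ (⊤ : Subgroup G).lowerCentralSeries (i+2)).Normal :=
          Subgroup.sup_normal _ _
        exact this.conj_mem _ (le_sup_left (α := Subgroup G) hcm) t
    have hiter : ∀ k, (⊤ : Subgroup G).lowerCentralSeries 2 ≤ ⁅M, M⁆ ⊔ (⊤ : Subgroup G).lowerCentralSeries (2 + k) := by
      intro k
      induction k with
      | zero => exact le_sup_right
      | succ k ih =>
        refine ih.trans (sup_le le_sup_left ?_)
        have h1 := hstep (k+1) (by omega)
        rw [show k + 1 + 1 = 2 + k from by omega, show k + 1 + 2 = 2 + (k+1) from by omega] at h1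
        exact h1
    have h2 := hiter (m - 3)
    rwa [show 2 + (m - 3) = m - 1 from by omega, hclass.1, sup_bot_eq] at h2
  -- Step 12 : conclusion
  have hphi : ∀ (y : ↥M), (y : G) ∈ ⁅M, M⁆ → (Abelianization.of : ↥M →* Abelianization ↥M) y = 1 := by
    intro y hy
    have hmm : ⁅M, M⁆ = Subgroup.map M.subtype (commutator ↥M) := by
      have htop : Subgroup.map M.subtype ⊤ = M := by
        rw [← MonoidHom.range_eq_map, Subgroup.range_subtype]
      rw [_root_.commutator_def, Subgroup.map_commutator, htop]
    rw [hmm] at hy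
    obtain ⟨x, hx, hxy⟩ := hy
    have hxeq : x = y := Subtype.ext hxy
    subst hxeq
    exact (QuotientGroup.eq_one_iff x).2 hx
  have hkey : ∀ g : G, g ∉ M → g ∉ Chi2 →
      (MonoidHom.transfer (Abelianization.of : ↥M →* Abelianization ↥M)) g = 1 := by
    intro g hgM hgChi
    classical
    haveI : Fintype (Quotient (MulAction.orbitRel (↥(zpowers g)) (G ⧸ M))) := Fintype.ofFinite _
    rw [MonoidHom.transfer_eq_prod_quotient_orbitRel_zpowers_quot]
    refine Finset.prod_eq_one fun q _ => ?_
    apply hphi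
    have hmem := QuotientGroup.out_conj_pow_minimalPeriod_mem M g q.out
    have hgk : g ^ (Function.minimalPeriod (fun x => g • x) q.out) ∈ M := by
      have h1 := hMnormal.conj_mem _ hmem (Quotient.out q.out)
      have h2 : Quotient.out q.out * ((Quotient.out q.out)⁻¹ *
          g ^ (Function.minimalPeriod (fun x => g • x) q.out) * Quotient.out q.out) *
          (Quotient.out q.out)⁻¹ = g ^ (Function.minimalPeriod (fun x => g • x) q.out) := by
        group
      rwa [h2] at h1
    obtain ⟨c, hc⟩ := hpowM g hgM _ hgk
    have hL2 : g ^ (Function.minimalPeriod (fun x => g • x) q.out)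
        ∈ (⊤ : Subgroup G).lowerCentralSeries 2 := by
      rw [hc, pow_mul]
      exact pow_mem (hB g hgChi) c
    have h3 := (Subgroup.lowerCentralSeries_normal ⊤ 2).conj_mem _ hL2 (Quotient.out q.out)⁻¹
    rw [inv_inv] at h3
    exact hD h3
  obtain ⟨h0, hh0M, hh0Chi⟩ : ∃ h0 : G, h0 ∉ M ∧ h0 ∉ Chi2 := by
    by_cases hc : Chi2 ≤ M
    · obtain ⟨x, -, hx⟩ := SetLike.exists_of_lt (lt_top_iff_ne_top.2 hM.1)
      exact ⟨x, hx, fun hxc => hx (hc hxc)⟩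
    · obtain ⟨b, hbChi, hbM⟩ := SetLike.not_le_iff_exists.1 hc
      refine ⟨s * b, fun hmem => hbM ?_, fun hmem => hsChi ?_⟩
      · have h1 := mul_mem (inv_mem hsM) hmem
        rwa [inv_mul_cancel_left] at h1
      · have h1 := mul_mem hmem (inv_mem hbChi)
        rwa [mul_inv_cancel_right] at h1
  have hsq : ∀ x : G, x ∉ M → x * x ∉ M := by
    intro x hx hxx
    have h1 : x ^ 2 ∈ M := by rw [pow_two]; exact hxx
    have h2 := hpowM x hx 2 h1
    have := Nat.le_of_dvd (by norm_num) h2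
    omega
  have hMker : ∀ x ∈ M,
      (MonoidHom.transfer (Abelianization.of : ↥M →* Abelianization ↥M)) x = 1 := by
    intro x hx
    by_cases hxh : x * h0 ∈ Chi2
    · have h1M : x * h0 * h0 ∉ M := by
        intro hmem
        have h2 := mul_mem (inv_mem hx) hmem
        rw [show x⁻¹ * (x * h0 * h0) = h0 * h0 by group] at h2
        exact hsq h0 hh0M h2
      have h1C : x * h0 * h0 ∉ Chi2 := by
        intro hmem
        have h2 := mul_mem (inv_mem hxh) hmem
        rw [show (x * h0)⁻¹ * (x * h0 * h0) = h0 by group] at h2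
        exact hh0Chi h2
      have hx_eq : (MonoidHom.transfer (Abelianization.of : ↥M →* Abelianization ↥M)) x
          = (MonoidHom.transfer (Abelianization.of : ↥M →* Abelianization ↥M)) (x * h0 * h0)
            * ((MonoidHom.transfer (Abelianization.of : ↥M →* Abelianization ↥M)) h0)⁻¹
            * ((MonoidHom.transfer (Abelianization.of : ↥M →* Abelianization ↥M)) h0)⁻¹ := by
        rw [← map_inv, ← map_mul, ← map_mul]
        congr 1
        group
      rw [hx_eq, hkey _ h1M h1C, hkey _ hh0M hh0Chi]
      simp
    · have h1M : x * h0 ∉ M := by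
        intro hmem
        have h2 := mul_mem (inv_mem hx) hmem
        rw [inv_mul_cancel_left] at h2
        exact hh0M h2
      have hx_eq : (MonoidHom.transfer (Abelianization.of : ↥M →* Abelianization ↥M)) x
          = (MonoidHom.transfer (Abelianization.of : ↥M →* Abelianization ↥M)) (x * h0)
            * ((MonoidHom.transfer (Abelianization.of : ↥M →* Abelianization ↥M)) h0)⁻¹ := by
        rw [← map_inv, ← map_mul]
        congr 1
        group
      rw [hx_eq, hkey _ h1M hxh, hkey _ hh0M hh0Chi]
      simp
  rw [eq_top_iff']
  intro x
  rw [MonoidHom.mem_ker]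
  by_cases hxM : x ∈ M
  · exact hMker x hxM
  · by_cases hxChi : x ∈ Chi2
    · have h1C : x * h0 ∉ Chi2 := by
        intro hmem
        have h2 := mul_mem (inv_mem hxChi) hmem
        rw [inv_mul_cancel_left] at h2
        exact hh0Chi h2
      have hx_eq : (MonoidHom.transfer (Abelianization.of : ↥M →* Abelianization ↥M)) x
          = (MonoidHom.transfer (Abelianization.of : ↥M →* Abelianization ↥M)) (x * h0)
            * ((MonoidHom.transfer (Abelianization.of : ↥M →* Abelianization ↥M)) h0)⁻¹ := by
        rw [← map_inv, ← map_mul]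
        congr 1
        group
      by_cases h1M : x * h0 ∈ M
      · rw [hx_eq, hMker _ h1M, hkey _ hh0M hh0Chi]
        simp
      · rw [hx_eq, hkey _ h1M h1C, hkey _ hh0M hh0Chi]
        simp
    · exact hkey x hxM hxChi
end

section
/- Let G be a group with elements u and h, and let N be a normal subgroup containing u such that the derived subgroup of N is trivial (N abelian). Then u^{1+h+h²} := u·(h⁻¹uh)·(h⁻²uh²) equals u³·[u,h]³·[[u,h],h] exactly (not just modulo a subgroup), provided [h⁻¹uh, u⁻¹] = 1, which holds since N is abelian and h⁻¹uh, u ∈ N. -/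
private lemma trace_cube_aux_s18 {G : Type*} [Group G] (u c d : G) (key : c * u = u * c) :
    u * (u * c) * (u * (c * d)) = u ^ 3 * c ^ 3 * (c⁻¹ * d) := by
  have : u * (u * c) * (u * (c * d)) = u * u * (c * u) * (c * d) := by group
  rw [this, key]
  simp [pow_succ, mul_assoc]

/-- Let `G` be a group, `N` an abelian normal subgroup, `u ∈ N`, `h ∈ G`. Then
`u^{1+h+h²} = u·(h⁻¹uh)·(h⁻²uh²)` equals `u³·[u,h]³·[[u,h],h]` exactly, where
`[a,b] = a⁻¹b⁻¹ab`. -/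
theorem trace_cube_exact (G : Type*) [Group G] (N : Subgroup G) [N.Normal]
    (hab : ∀ a ∈ N, ∀ b ∈ N, Commute a b) (u h : G) (hu : u ∈ N) :
    u * (h⁻¹ * u * h) * (h⁻¹ * h⁻¹ * u * h * h) =
      u ^ 3 * (u⁻¹ * h⁻¹ * u * h) ^ 3 *
        ((u⁻¹ * h⁻¹ * u * h)⁻¹ * h⁻¹ * (u⁻¹ * h⁻¹ * u * h) * h) := by
  have hvmem : h⁻¹ * u * h ∈ N := by
    simpa using ‹N.Normal›.conj_mem u hu h⁻¹
  have hc : u * (h⁻¹ * u * h) = (h⁻¹ * u * h) * u := hab u hu _ hvmem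
  have key : (u⁻¹ * h⁻¹ * u * h) * u = u * (u⁻¹ * h⁻¹ * u * h) := by
    have h1 : (u⁻¹ * h⁻¹ * u * h) * u = u⁻¹ * ((h⁻¹ * u * h) * u) := by group
    have h2 : u * (u⁻¹ * h⁻¹ * u * h) = u⁻¹ * (u * (h⁻¹ * u * h)) := by group
    rw [h1, h2, hc]
  calc u * (h⁻¹ * u * h) * (h⁻¹ * h⁻¹ * u * h * h)
      = u * (u * (u⁻¹ * h⁻¹ * u * h)) *
        (u * ((u⁻¹ * h⁻¹ * u * h) * (h⁻¹ * (u⁻¹ * h⁻¹ * u * h) * h))) := by group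
    _ = u ^ 3 * (u⁻¹ * h⁻¹ * u * h) ^ 3 *
        ((u⁻¹ * h⁻¹ * u * h)⁻¹ * (h⁻¹ * (u⁻¹ * h⁻¹ * u * h) * h)) :=
      trace_cube_aux_s18 u _ _ key
    _ = u ^ 3 * (u⁻¹ * h⁻¹ * u * h) ^ 3 *
        ((u⁻¹ * h⁻¹ * u * h)⁻¹ * h⁻¹ * (u⁻¹ * h⁻¹ * u * h) * h) := by group
end
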